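/- arXiv:2311.08003 — 2 statements merged into one kernel-verified Lean document; each statement's English description precedes it below -/
import Mathlib

section
/- Let (Q,R) be a gentle presentation and write H^m for the degree-m cohomology of the complex k(Γ∥B). The following are equivalent: (1) there is an integer m₀ such that Γ_m = ∅ for all m ≥ m₀ (equivalently, the algebra kQ/⟨R⟩ has finite global dimension); (2) there is an integer m₀ such that H^m = 0 for all m ≥ m₀; (3) there is no complete cycle in (Q,R). -/
/-!
Common framework: quivers, paths (as a start vertex together with a list of
composable arrows, listed in order of traversal, so that the paper's path
`c_m ⋯ c_1` corresponds to the list `[c_1, …, c_m]`), gentle and quadratic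
monomial presentations, the cochain complex `k(Γ ∥ B)` and the chain complex
`k(B ⊙ Γ)` of the paper.
-/

namespace GentleTT

structure Quiv where
  V : Type
  A : Type
  [fintV : Fintype V]
  [fintA : Fintype A]
  [decV : DecidableEq V]
  [decA : DecidableEq A]
  src : A → V
  tgt : A → V

attribute [instance] Quiv.fintV Quiv.fintA Quiv.decV Quiv.decA

/-- A "path datum": a start vertex together with the list of arrows traversed. -/
abbrev PathDat (Q : Quiv) := Q.V × List Q.A

def psrc (Q : Quiv) (p : PathDat Q) : Q.V := p.1

def ptgt (Q : Quiv) (p : PathDat Q) : Q.V := p.2.getLast?.elim p.1 Q.tgt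

def plen (Q : Quiv) (p : PathDat Q) : ℕ := p.2.length

/-- `p` is a genuine path: consecutive arrows compose, and the recorded start
vertex is the source of the first arrow (if any). -/
def Ok (Q : Quiv) (p : PathDat Q) : Prop :=
  p.2.Chain' (fun a b => Q.tgt a = Q.src b) ∧ ∀ a ∈ p.2.head?, Q.src a = p.1

/-- `p` is a path none of whose length-2 subpaths lies in `R`
(an element of the basis `B` of `kQ/⟨R⟩`). -/
def InB (Q : Quiv) (R : Set (Q.A × Q.A)) (p : PathDat Q) : Prop :=
  Ok Q p ∧ p.2.Chain' (fun a b => (a, b) ∉ R)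

/-- `p` is a path all of whose length-2 subpaths lie in `R` (an element of `Γ`). -/
def InG (Q : Quiv) (R : Set (Q.A × Q.A)) (p : PathDat Q) : Prop :=
  Ok Q p ∧ p.2.Chain' (fun a b => (a, b) ∈ R)

/-- Parallel paths: same source and same target. -/
def Par (Q : Quiv) (p q : PathDat Q) : Prop :=
  psrc Q p = psrc Q q ∧ ptgt Q p = ptgt Q q

/-- Antiparallel paths: `s(p) = t(q)` and `t(p) = s(q)`. -/
def AntiPar (Q : Quiv) (p q : PathDat Q) : Prop :=
  psrc Q p = ptgt Q q ∧ ptgt Q p = psrc Q q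

/-- A cycle: a path of positive length whose source equals its target. -/
def IsCycle (Q : Quiv) (p : PathDat Q) : Prop :=
  Ok Q p ∧ p.2 ≠ [] ∧ psrc Q p = ptgt Q p

/-- Rotation of a cycle: the paper's `rot (c_m ⋯ c_1) = c_{m-1} ⋯ c_1 c_m`
(the last arrow traversed becomes the first one traversed). -/
def rotP (Q : Quiv) (p : PathDat Q) : PathDat Q :=
  match p.2.getLast? with
  | none => p
  | some a => (Q.src a, a :: p.2.dropLast)

/-- Iterated rotation `rot^i`. -/
def rotI (Q : Quiv) (i : ℕ) (p : PathDat Q) : PathDat Q := (rotP Q)^[i] p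

def powL {α : Type} (l : List α) : ℕ → List α
  | 0 => []
  | n + 1 => l ++ powL l n

/-- The `n`-th power `p^n` of a (cyclic) path. -/
def powP (Q : Quiv) (p : PathDat Q) (n : ℕ) : PathDat Q := (p.1, powL p.2 n)

/-- A primitive cycle: a cycle that is not a proper power of another cycle. -/
def IsPrimitive (Q : Quiv) (p : PathDat Q) : Prop :=
  IsCycle Q p ∧ ∀ (q : PathDat Q) (n : ℕ), IsCycle Q q → 2 ≤ n → p ≠ powP Q q n

/-- The period of a cycle: the least `i ≥ 1` with `rot^i p = p`. -/
noncomputable def periodP (Q : Quiv) (p : PathDat Q) : ℕ :=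
  sInf {i : ℕ | 1 ≤ i ∧ rotI Q i p = p}

/-- Two cycles are conjugate (belong to the same circuit) if one is obtained
from the other by iterated rotation. -/
def RotEquiv (Q : Quiv) (p q : PathDat Q) : Prop := ∃ i : ℕ, rotI Q i p = q

/-- A cocomplete cycle: `p² ∈ B`. -/
def Cocomplete (Q : Quiv) (R : Set (Q.A × Q.A)) (p : PathDat Q) : Prop :=
  IsCycle Q p ∧ InB Q R (powP Q p 2)

/-- A complete cycle: `p² ∈ Γ`. -/
def Complete (Q : Quiv) (R : Set (Q.A × Q.A)) (p : PathDat Q) : Prop :=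
  IsCycle Q p ∧ InG Q R (powP Q p 2)

/-- `B`-maximal path: in `B` and not a proper subpath of another element of `B`. -/
def BMax (Q : Quiv) (R : Set (Q.A × Q.A)) (p : PathDat Q) : Prop :=
  InB Q R p ∧ ∀ q : PathDat Q, InB Q R q → p.2 <:+: q.2 → p.2 = q.2

/-- `Γ`-maximal path: in `Γ` and not a proper subpath of another element of `Γ`. -/
def GMax (Q : Quiv) (R : Set (Q.A × Q.A)) (p : PathDat Q) : Prop :=
  InG Q R p ∧ ∀ q : PathDat Q, InG Q R q → p.2 <:+: q.2 → p.2 = q.2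

def Adj (Q : Quiv) (v w : Q.V) : Prop :=
  ∃ a : Q.A, (Q.src a = v ∧ Q.tgt a = w) ∨ (Q.src a = w ∧ Q.tgt a = v)

/-- Connectedness of the underlying graph of the quiver. -/
def Connected (Q : Quiv) : Prop := ∀ v w : Q.V, Relation.ReflTransGen (Adj Q) v w

/-- A quadratic monomial presentation: the relations are paths of length 2. -/
def IsQuadMon (Q : Quiv) (R : Set (Q.A × Q.A)) : Prop :=
  ∀ r ∈ R, Q.tgt r.1 = Q.src r.2

/-- A gentle presentation. -/
structure IsGentle (Q : Quiv) (R : Set (Q.A × Q.A)) : Prop where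
  nonempty : Nonempty Q.V
  connected : Connected Q
  relComposable : ∀ r ∈ R, Q.tgt r.1 = Q.src r.2
  srcLe : ∀ v : Q.V, {a : Q.A | Q.src a = v}.ncard ≤ 2
  tgtLe : ∀ v : Q.V, {a : Q.A | Q.tgt a = v}.ncard ≤ 2
  uniqNotRelAfter : ∀ a : Q.A, {b : Q.A | Q.tgt a = Q.src b ∧ (a, b) ∉ R}.Subsingleton
  uniqNotRelBefore : ∀ a : Q.A, {c : Q.A | Q.tgt c = Q.src a ∧ (c, a) ∉ R}.Subsingleton
  uniqRelAfter : ∀ a : Q.A, {b : Q.A | Q.tgt a = Q.src b ∧ (a, b) ∈ R}.Subsingleton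
  uniqRelBefore : ∀ a : Q.A, {c : Q.A | Q.tgt c = Q.src a ∧ (c, a) ∈ R}.Subsingleton

/-- A spanning tree of the (finite, connected) quiver `Q`: a set of arrows
which connects all vertices and has exactly `|Q₀| - 1` elements. -/
def IsSpanningTree (Q : Quiv) (T : Set Q.A) : Prop :=
  (∀ v w : Q.V, Relation.ReflTransGen
      (fun x y => ∃ a ∈ T, (Q.src a = x ∧ Q.tgt a = y) ∨ (Q.src a = y ∧ Q.tgt a = x)) v w) ∧
  T.ncard + 1 = Fintype.card Q.V

/-- A set of representatives, one for each rotation class of cycles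
satisfying `Pred`. -/
def IsRepSet (Q : Quiv) (P : Set (PathDat Q)) (Pred : PathDat Q → Prop) : Prop :=
  (∀ p ∈ P, Pred p) ∧ ∀ q : PathDat Q, Pred q → ∃! p, p ∈ P ∧ RotEquiv Q q p

/-- `S` is a valid choice of the paper's set `Crep` for the predicate `Pred`
(e.g. cocompleteness, or completeness): it consists of all positive powers of a
chosen set of representatives of the rotation classes of primitive cycles
satisfying `Pred`. -/
def IsCrep (Q : Quiv) (S : Set (PathDat Q)) (Pred : PathDat Q → Prop) : Prop :=
  ∃ P : Set (PathDat Q),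
    IsRepSet Q P (fun p => IsPrimitive Q p ∧ Pred p) ∧
    S = {x | ∃ p ∈ P, ∃ n : ℕ, 1 ≤ n ∧ x = powP Q p n}

/-! ### The cochain complex `k(Γ ∥ B)` -/

/-- Membership in the degree-`m` basis `Γ_m ∥ B` of the cochain complex. -/
def GBmem (Q : Quiv) (R : Set (Q.A × Q.A)) (m : ℕ) (x : PathDat Q × PathDat Q) : Prop :=
  InG Q R x.1 ∧ plen Q x.1 = m ∧ InB Q R x.2 ∧ Par Q x.1 x.2

abbrev GB (Q : Quiv) (R : Set (Q.A × Q.A)) (m : ℕ) :=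
  {x : PathDat Q × PathDat Q // GBmem Q R m x}

/-- The degree-`m` component of the cochain complex `k(Γ ∥ B)`. -/
abbrev Coch (k : Type) [Field k] (Q : Quiv) (R : Set (Q.A × Q.A)) (m : ℕ) :=
  GB Q R m →₀ k

/-- The basis vector of `k(Γ_m ∥ B)` attached to a raw pair of path data
(and `0` if the pair is not in `Γ_m ∥ B`). -/
noncomputable def bv (k : Type) [Field k] (Q : Quiv) (R : Set (Q.A × Q.A)) (m : ℕ)
    (x : PathDat Q × PathDat Q) : Coch k Q R m := by
  classical
  exact if h : GBmem Q R m x then Finsupp.single (⟨x, h⟩ : GB Q R m) (1 : k) else 0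

/-- Extension on the left (in the paper's notation): `p ↦ b p`. -/
def extL (Q : Quiv) (b : Q.A) (p : PathDat Q) : PathDat Q := (p.1, p.2 ++ [b])

/-- Extension on the right (in the paper's notation): `p ↦ p a`. -/
def extR (Q : Quiv) (a : Q.A) (p : PathDat Q) : PathDat Q := (Q.src a, a :: p.2)

/-- The differential on a basis element:
`d^m (γ, α) = Σ_b (bγ, bα) - (-1)^m Σ_a (γa, αa)`. -/
noncomputable def dB (k : Type) [Field k] (Q : Quiv) (R : Set (Q.A × Q.A)) (m : ℕ)
    (x : GB Q R m) : Coch k Q R (m + 1) := by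
  classical
  exact
    (∑ b : Q.A,
      if h : GBmem Q R (m + 1) (extL Q b x.val.1, extL Q b x.val.2) then
        Finsupp.single (⟨_, h⟩ : GB Q R (m + 1)) (1 : k) else 0)
    - ((-1 : k) ^ m) •
      (∑ a : Q.A,
        if h : Q.tgt a = psrc Q x.val.1 ∧
            GBmem Q R (m + 1) (extR Q a x.val.1, extR Q a x.val.2) then
          Finsupp.single (⟨_, h.2⟩ : GB Q R (m + 1)) (1 : k) else 0)

/-- The differential `d^m : k(Γ_m ∥ B) → k(Γ_{m+1} ∥ B)`. -/
noncomputable def dLin (k : Type) [Field k] (Q : Quiv) (R : Set (Q.A × Q.A)) (m : ℕ) :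
    Coch k Q R m →ₗ[k] Coch k Q R (m + 1) :=
  Finsupp.linearCombination k (dB k Q R m)

/-- The element `𝟙 = Σ_{i ∈ Q₀} (e_i, e_i)` (placed in degree `m`; it is the
intended element when `m = 0`). -/
noncomputable def oneD (k : Type) [Field k] (Q : Quiv) (R : Set (Q.A × Q.A)) (m : ℕ) :
    Coch k Q R m :=
  ∑ i : Q.V, bv k Q R m ((i, []), (i, []))

/-- `⟨α⟩ = Σ_{i=0}^{r-1} (s(rot^i α), rot^i α)`, `r` the period of `α`. -/
noncomputable def cycB (k : Type) [Field k] (Q : Quiv) (R : Set (Q.A × Q.A)) (m : ℕ)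
    (α : PathDat Q) : Coch k Q R m :=
  ∑ i ∈ Finset.range (periodP Q α),
    bv k Q R m ((psrc Q (rotI Q i α), []), rotI Q i α)

/-- `⟨C⟩ = Σ_{i=0}^{r-1} (-1)^{i m} (rot^i C, s(rot^i C))`, `r` the period of `C`. -/
noncomputable def cycG (k : Type) [Field k] (Q : Quiv) (R : Set (Q.A × Q.A)) (m : ℕ)
    (C : PathDat Q) : Coch k Q R m :=
  ∑ i ∈ Finset.range (periodP Q C),
    ((-1 : k) ^ (i * m)) • bv k Q R m (rotI Q i C, (psrc Q (rotI Q i C), []))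

/-- The coboundary subspace in degree `m` (zero in degree `0`). -/
noncomputable def cobSp (k : Type) [Field k] (Q : Quiv) (R : Set (Q.A × Q.A)) :
    (m : ℕ) → Submodule k (Coch k Q R m)
  | 0 => ⊥
  | m + 1 => LinearMap.range (dLin k Q R m)

/-- The cocycle subspace in degree `m`. -/
noncomputable def cocSp (k : Type) [Field k] (Q : Quiv) (R : Set (Q.A × Q.A)) (m : ℕ) :
    Submodule k (Coch k Q R m) :=
  LinearMap.ker (dLin k Q R m)

/-- The degree-`m` cohomology `HH^m` of the complex `k(Γ ∥ B)` vanishes: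
every cocycle is a coboundary. -/
def CohomIsZero (k : Type) [Field k] (Q : Quiv) (R : Set (Q.A × Q.A)) (m : ℕ) : Prop :=
  cocSp k Q R m ≤ cobSp k Q R m

/-- The degree-`m` cohomology `HH^m` of the complex `k(Γ ∥ B)` is
finite-dimensional: there is a finite set of cocycles whose classes span it. -/
def CohomFinDim (k : Type) [Field k] (Q : Quiv) (R : Set (Q.A × Q.A)) (m : ℕ) : Prop :=
  ∃ G : Finset (Coch k Q R m), ↑G ⊆ (cocSp k Q R m : Set (Coch k Q R m)) ∧
    cocSp k Q R m ≤ cobSp k Q R m ⊔ Submodule.span k ↑G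

/-- The degree-`m` cohomology `HH^m` of the complex `k(Γ ∥ B)` has dimension at
most `n`: there are `n` cocycles whose classes span it. -/
def CohomDimLe (k : Type) [Field k] (Q : Quiv) (R : Set (Q.A × Q.A)) (m n : ℕ) : Prop :=
  ∃ G : Finset (Coch k Q R m), G.card ≤ n ∧
    ↑G ⊆ (cocSp k Q R m : Set (Coch k Q R m)) ∧
    cocSp k Q R m ≤ cobSp k Q R m ⊔ Submodule.span k ↑G

/-- `Gen` is a basis of the kernel of `d⁰`, i.e. it freely generates `HH⁰`. -/
def FreelyGeneratesKer0 (k : Type) [Field k] (Q : Quiv) (R : Set (Q.A × Q.A))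
    (Gen : Set (Coch k Q R 0)) : Prop :=
  (∀ x ∈ Gen, dLin k Q R 0 x = 0) ∧
  (∀ z : Coch k Q R 0, dLin k Q R 0 z = 0 → z ∈ Submodule.span k Gen) ∧
  LinearIndependent k (fun x : Gen => (x : Coch k Q R 0))

/-- The cohomology classes of the elements of `Gen` freely generate the
degree-`(m+1)` cohomology of `k(Γ ∥ B)`: all elements of `Gen` are cocycles,
every cocycle is congruent to an element of their span modulo coboundaries, no
nonzero element of their span is a coboundary, and `Gen` is linearly
independent. -/
def FreelyGeneratesCohom (k : Type) [Field k] (Q : Quiv) (R : Set (Q.A × Q.A)) (m : ℕ)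
    (Gen : Set (Coch k Q R (m + 1))) : Prop :=
  (∀ x ∈ Gen, dLin k Q R (m + 1) x = 0) ∧
  (∀ z : Coch k Q R (m + 1), dLin k Q R (m + 1) z = 0 →
      ∃ y : Coch k Q R m, z - dLin k Q R m y ∈ Submodule.span k Gen) ∧
  (∀ x ∈ Submodule.span k Gen, x ∈ LinearMap.range (dLin k Q R m) → x = 0) ∧
  LinearIndependent k (fun x : Gen => (x : Coch k Q R (m + 1)))

/-! ### The chain complex `k(B ⊙ Γ)` -/

/-- Membership in the degree-`m` basis `B ⊙ Γ_m` of the chain complex. -/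
def BGmem (Q : Quiv) (R : Set (Q.A × Q.A)) (m : ℕ) (x : PathDat Q × PathDat Q) : Prop :=
  InB Q R x.1 ∧ InG Q R x.2 ∧ plen Q x.2 = m ∧ AntiPar Q x.1 x.2

abbrev BGt (Q : Quiv) (R : Set (Q.A × Q.A)) (m : ℕ) :=
  {x : PathDat Q × PathDat Q // BGmem Q R m x}

/-- The degree-`m` component of the chain complex `k(B ⊙ Γ)`. -/
abbrev Chn (k : Type) [Field k] (Q : Quiv) (R : Set (Q.A × Q.A)) (m : ℕ) :=
  BGt Q R m →₀ k

/-- The basis vector of `k(B ⊙ Γ_m)` attached to a raw pair of path data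
(and `0` if the pair is not in `B ⊙ Γ_m`). -/
noncomputable def bw (k : Type) [Field k] (Q : Quiv) (R : Set (Q.A × Q.A)) (m : ℕ)
    (x : PathDat Q × PathDat Q) : Chn k Q R m := by
  classical
  exact if h : BGmem Q R m x then Finsupp.single (⟨x, h⟩ : BGt Q R m) (1 : k) else 0

/-- `l1(p)`: the last arrow of `p` (as a path of length one). -/
def l1P (Q : Quiv) (p : PathDat Q) : PathDat Q :=
  match p.2.getLast? with
  | none => p
  | some a => (Q.src a, [a])

/-- `l2(p)`: `p` with its last arrow removed. -/
def l2P (Q : Quiv) (p : PathDat Q) : PathDat Q := (p.1, p.2.dropLast)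

/-- `r1(p)`: `p` with its first arrow removed. -/
def r1P (Q : Quiv) (p : PathDat Q) : PathDat Q :=
  match p.2 with
  | [] => p
  | a :: l => (Q.tgt a, l)

/-- `r2(p)`: the first arrow of `p` (as a path of length one). -/
def r2P (Q : Quiv) (p : PathDat Q) : PathDat Q :=
  match p.2 with
  | [] => p
  | a :: _ => (Q.src a, [a])

/-- The raw first term `(α·l1(γ), l2(γ))` of the boundary of `(α, γ)`. -/
def d1raw (Q : Quiv) (x : PathDat Q × PathDat Q) : PathDat Q × PathDat Q :=
  match x.2.2.getLast? with
  | none => x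
  | some a => ((Q.src a, a :: x.1.2), (x.2.1, x.2.2.dropLast))

/-- The raw second term `(r2(γ)·α, r1(γ))` of the boundary of `(α, γ)`. -/
def d2raw (Q : Quiv) (x : PathDat Q × PathDat Q) : PathDat Q × PathDat Q :=
  match x.2.2 with
  | [] => x
  | c :: l => ((x.1.1, x.1.2 ++ [c]), (Q.tgt c, l))

/-- The boundary of a basis element:
`d_m (α, γ) = (α·l1(γ), l2(γ)) + (-1)^m (r2(γ)·α, r1(γ))` (in degree `m = m+1`),
where pairs whose first component is not in `B` are interpreted as `0`. -/
noncomputable def bdB (k : Type) [Field k] (Q : Quiv) (R : Set (Q.A × Q.A)) (m : ℕ)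
    (x : BGt Q R (m + 1)) : Chn k Q R m :=
  bw k Q R m (d1raw Q x.val) + ((-1 : k) ^ (m + 1)) • bw k Q R m (d2raw Q x.val)

/-- The boundary map `d_{m+1} : k(B ⊙ Γ_{m+1}) → k(B ⊙ Γ_m)`. -/
noncomputable def bd (k : Type) [Field k] (Q : Quiv) (R : Set (Q.A × Q.A)) (m : ℕ) :
    Chn k Q R (m + 1) →ₗ[k] Chn k Q R m :=
  Finsupp.linearCombination k (bdB k Q R m)

/-- The subspace of cycles in degree `m` (everything in degree `0`). -/
noncomputable def ZSp (k : Type) [Field k] (Q : Quiv) (R : Set (Q.A × Q.A)) :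
    (m : ℕ) → Submodule k (Chn k Q R m)
  | 0 => ⊤
  | m + 1 => LinearMap.ker (bd k Q R m)

/-- The subspace of boundaries in degree `m`. -/
noncomputable def BSp (k : Type) [Field k] (Q : Quiv) (R : Set (Q.A × Q.A)) (m : ℕ) :
    Submodule k (Chn k Q R m) :=
  LinearMap.range (bd k Q R m)

/-- The degree-`m` homology `HH_m` of the complex `k(B ⊙ Γ)` vanishes:
every cycle is a boundary. -/
def HomIsZero (k : Type) [Field k] (Q : Quiv) (R : Set (Q.A × Q.A)) (m : ℕ) : Prop :=
  ZSp k Q R m ≤ BSp k Q R m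

/-- The degree-`m` homology `HH_m` of the complex `k(B ⊙ Γ)` is
finite-dimensional: there is a finite set of cycles whose classes span it. -/
def HomFinDim (k : Type) [Field k] (Q : Quiv) (R : Set (Q.A × Q.A)) (m : ℕ) : Prop :=
  ∃ G : Finset (Chn k Q R m), ↑G ⊆ (ZSp k Q R m : Set (Chn k Q R m)) ∧
    ZSp k Q R m ≤ BSp k Q R m ⊔ Submodule.span k ↑G

/-- The concatenation `α γ` of an antiparallel pair (a cycle, or a trivial path). -/
def concatP (Q : Quiv) (x : PathDat Q × PathDat Q) : PathDat Q := (x.2.1, x.2.2 ++ x.1.2)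

/-- The degree-`m` component of the subcomplex `k(B ⊙ Γ)_C`, spanned by the
basis elements whose concatenation lies in the circuit (rotation class) of `c`. -/
noncomputable def Wsp (k : Type) [Field k] (Q : Quiv) (R : Set (Q.A × Q.A))
    (c : PathDat Q) (m : ℕ) : Submodule k (Chn k Q R m) :=
  Submodule.span k {z : Chn k Q R m |
    ∃ x : BGt Q R m, RotEquiv Q (concatP Q x.val) c ∧ z = Finsupp.single x (1 : k)}

/-- The boundaries of the subcomplex `k(B ⊙ Γ)_C` in degree `m`. -/
noncomputable def WB (k : Type) [Field k] (Q : Quiv) (R : Set (Q.A × Q.A))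
    (c : PathDat Q) (m : ℕ) : Submodule k (Chn k Q R m) :=
  Submodule.map (bd k Q R m) (Wsp k Q R c (m + 1))

/-- The cycles of the subcomplex `k(B ⊙ Γ)_C` in degree `m`. -/
noncomputable def WZ (k : Type) [Field k] (Q : Quiv) (R : Set (Q.A × Q.A))
    (c : PathDat Q) (m : ℕ) : Submodule k (Chn k Q R m) :=
  ZSp k Q R m ⊓ Wsp k Q R c m

/-- The degree-`m` homology of `k(B ⊙ Γ)_C` is one-dimensional, spanned by the
homology class of `v`. -/
def SubHomSpannedBy (k : Type) [Field k] (Q : Quiv) (R : Set (Q.A × Q.A))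
    (c : PathDat Q) (m : ℕ) (v : Chn k Q R m) : Prop :=
  v ∈ WZ k Q R c m ∧ v ∉ WB k Q R c m ∧
  ∀ z ∈ WZ k Q R c m, ∃ t : k, z - t • v ∈ WB k Q R c m

/-- `ĥ(c) = Σ_{i=0}^{r-1} (r1(rot^i c), r2(rot^i c))` (degree 1, for cocomplete cycles;
placed in degree `m`). -/
noncomputable def hCycR (k : Type) [Field k] (Q : Quiv) (R : Set (Q.A × Q.A)) (m : ℕ)
    (c : PathDat Q) : Chn k Q R m :=
  ∑ i ∈ Finset.range (periodP Q c),
    bw k Q R m (r1P Q (rotI Q i c), r2P Q (rotI Q i c))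

/-- `ĥ(c) = Σ_{i=0}^{r-1} (-1)^{(m+1) i} (s(rot^i c), rot^i c)` (degree `m`, for
complete cycles of length `m`). -/
noncomputable def hCycM (k : Type) [Field k] (Q : Quiv) (R : Set (Q.A × Q.A)) (m : ℕ)
    (c : PathDat Q) : Chn k Q R m :=
  ∑ i ∈ Finset.range (periodP Q c),
    ((-1 : k) ^ ((m + 1) * i)) • bw k Q R m ((psrc Q (rotI Q i c), []), rotI Q i c)

/-- The homology classes of the elements of `Gen` freely generate the degree-`m`
homology of `k(B ⊙ Γ)`. -/
def FreelyGeneratesHom (k : Type) [Field k] (Q : Quiv) (R : Set (Q.A × Q.A)) (m : ℕ)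
    (Gen : Set (Chn k Q R m)) : Prop :=
  (∀ x ∈ Gen, x ∈ ZSp k Q R m) ∧
  (∀ z ∈ ZSp k Q R m, ∃ y : Chn k Q R (m + 1), z - bd k Q R m y ∈ Submodule.span k Gen) ∧
  (∀ x ∈ Submodule.span k Gen, x ∈ LinearMap.range (bd k Q R m) → x = 0) ∧
  LinearIndependent k (fun x : Gen => (x : Chn k Q R m))

/-! ### Auxiliary development -/

section Aux

variable (Q : Quiv) (R : Set (Q.A × Q.A))

/-- The combined composability-and-relation relation on arrows. -/
def Rel (a b : Q.A) : Prop := Q.tgt a = Q.src b ∧ (a, b) ∈ R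

/-- A "cyclically complete" list of arrows: every cyclically consecutive
pair is composable and lies in `R`. -/
def CyL (l : List Q.A) : Prop :=
  ∀ t (ht : t < l.length),
    Rel Q R (l[t]) (l[(t + 1) % l.length]'(Nat.mod_lt _ (by omega)))

/-- A "cyclically complete" path datum. -/
def CyP (p : PathDat Q) : Prop :=
  p.2 ≠ [] ∧ (∀ h : p.2 ≠ [], p.1 = Q.src (p.2.head h)) ∧ CyL Q R p.2

variable {Q R}

lemma CyL.chain'' {l : List Q.A} (h : CyL Q R l) : l.Chain' (Rel Q R) := by
  simp only [List.Chain']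
  rw [List.isChain_iff_getElem]
  intro i hi
  have := h i (by omega)
  simpa [Nat.mod_eq_of_lt (show i + 1 < l.length by omega)] using this

lemma CyL.wrap {l : List Q.A} (h : CyL Q R l) (hne : l ≠ []) :
    Rel Q R (l.getLast hne) (l.head hne) := by
  have hl : 0 < l.length := List.length_pos_iff.mpr hne
  have := h (l.length - 1) (by omega)
  rw [List.getLast_eq_getElem, List.head_eq_getElem]
  simpa [Nat.sub_add_cancel hl, Nat.mod_self] using this

lemma CyP.ok {p : PathDat Q} (h : CyP Q R p) : Ok Q p := by
  refine ⟨(h.2.2.chain'').imp fun a b hab => hab.1, ?_⟩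
  intro a ha
  rw [List.head?_eq_head h.1] at ha
  simp only [Option.mem_def, Option.some.injEq] at ha
  rw [← ha, ← h.2.1 h.1]

lemma CyP.inG {p : PathDat Q} (h : CyP Q R p) : InG Q R p :=
  ⟨h.ok, (h.2.2.chain'').imp fun a b hab => hab.2⟩

lemma CyP.ptgt_eq {p : PathDat Q} (h : CyP Q R p) : ptgt Q p = p.1 := by
  have hne := h.1
  have hw := h.2.2.wrap hne
  unfold ptgt
  rw [List.getLast?_eq_getLast hne]
  simp only [Option.elim]
  rw [hw.1, ← h.2.1 hne]

lemma CyP.gbmem {p : PathDat Q} (h : CyP Q R p) :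
    GBmem Q R p.2.length (p, (p.1, [])) := by
  refine ⟨h.inG, rfl, ⟨⟨List.isChain_nil, by simp⟩, List.isChain_nil⟩, rfl, ?_⟩
  show ptgt Q p = ptgt Q (p.1, [])
  rw [h.ptgt_eq]; rfl

lemma powL_length (l : List Q.A) (n : ℕ) : (powL l n).length = n * l.length := by
  induction n with
  | zero => simp [powL]
  | succ n ih => simp [powL, ih, Nat.succ_mul]; omega

lemma getElem_powL (l : List Q.A) (hl : l ≠ []) (n t : ℕ)
    (ht : t < (powL l n).length) :
    (powL l n)[t] = l[t % l.length]'(Nat.mod_lt _ (List.length_pos_iff.mpr hl)) := by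
  induction n generalizing t with
  | zero => simp [powL] at ht
  | succ n ih =>
    have hlen : (powL l (n+1)).length = l.length + (powL l n).length := by
      simp [powL]
    by_cases hc : t < l.length
    · have : (powL l (n+1))[t] = l[t] := by
        simp only [powL]; exact List.getElem_append_left hc
      rw [this]
      congr 1
      exact (Nat.mod_eq_of_lt hc).symm
    · push_neg at hc
      have h2 : t - l.length < (powL l n).length := by
        rw [hlen] at ht; omega
      have : (powL l (n+1))[t] = (powL l n)[t - l.length]'h2 := by
        simp only [powL]; exact List.getElem_append_right hc
      rw [this, ih]
      congr 1
      have hpos : 0 < l.length := List.length_pos_iff.mpr hl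
      conv_rhs => rw [Nat.mod_eq_sub_mod hc]

lemma CyL.pow {l : List Q.A} (h : CyL Q R l) (n : ℕ) : CyL Q R (powL l n) := by
  rcases eq_or_ne l [] with rfl | hl
  · intro t ht
    have : (powL ([] : List Q.A) n).length = 0 := by simp [powL_length]
    omega
  intro t ht
  have hpos : 0 < l.length := List.length_pos_iff.mpr hl
  have hNpos : 0 < (powL l n).length := by omega
  have hdvd : l.length ∣ (powL l n).length := by
    rw [powL_length]; exact dvd_mul_left _ _
  rw [getElem_powL l hl, getElem_powL l hl]
  have h1 : (t + 1) % (powL l n).length % l.length = (t + 1) % l.length :=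
    Nat.mod_mod_of_dvd _ hdvd
  have h2 : (t % l.length + 1) % l.length = (t + 1) % l.length := by
    conv_rhs => rw [Nat.add_mod]
    rw [Nat.add_mod (t % l.length) 1, Nat.mod_mod_of_dvd _ (dvd_refl _)]
  have := h (t % l.length) (Nat.mod_lt _ hpos)
  convert this using 2
  omega

lemma CyP.pow {C : PathDat Q} (h : CyP Q R C) (n : ℕ) (hn : 1 ≤ n) :
    CyP Q R (C.1, powL C.2 n) := by
  have hl : C.2 ≠ [] := h.1
  have hpos : 0 < C.2.length := List.length_pos_iff.mpr hl
  have hlen : (powL C.2 n).length = n * C.2.length := powL_length _ _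
  have hne : powL C.2 n ≠ [] := by
    apply List.ne_nil_of_length_pos
    rw [hlen]; exact Nat.mul_pos hn hpos
  refine ⟨hne, ?_, h.2.2.pow n⟩
  intro h'
  rw [List.head_eq_getElem, getElem_powL _ hl]
  simp only [Nat.zero_mod]
  rw [h.2.1 hl, List.head_eq_getElem]

lemma rel_of_chain_sq {r : Q.A → Q.A → Prop} {l : List Q.A}
    (h : List.Chain' r (l ++ l)) (t : ℕ) (ht : t < l.length) :
    r (l[t]) (l[(t + 1) % l.length]'(Nat.mod_lt _ (by omega))) := by
  have hlen : (l ++ l).length = l.length + l.length := by simp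
  simp only [List.Chain'] at h
  rw [List.isChain_iff_getElem] at h
  have := h t (by simp; omega)
  by_cases hc : t + 1 < l.length
  · rw [List.getElem_append_left (by omega), List.getElem_append_left hc] at this
    simpa [Nat.mod_eq_of_lt hc] using this
  · have heq : t + 1 = l.length := by omega
    rw [List.getElem_append_left (by omega), List.getElem_append_right (by omega)] at this
    have : r (l[t]) (l[0]'(by omega)) := by
      convert this using 2
      omega
    convert this using 2
    rw [heq, Nat.mod_self]

lemma Complete.cyP {C : PathDat Q} (h : Complete Q R C) : CyP Q R C := by
  obtain ⟨⟨hok, hne, _⟩, hg2⟩ := h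
  have hpow : powL C.2 2 = C.2 ++ C.2 := by simp [powL]
  have hsq : InG Q R (C.1, C.2 ++ C.2) := by
    have := hg2
    unfold powP at this
    rwa [hpow] at this
  refine ⟨hne, ?_, ?_⟩
  · intro h'
    exact (hok.2 _ (by simp [List.head?_eq_head h'])).symm
  · intro t ht
    exact ⟨rel_of_chain_sq hsq.1.1 t ht, rel_of_chain_sq hsq.2 t ht⟩

lemma CyP.complete {C : PathDat Q} (h : CyP Q R C) : Complete Q R C := by
  refine ⟨⟨h.ok, h.1, ?_⟩, (h.pow 2 (by omega)).inG⟩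
  show psrc Q C = ptgt Q C
  rw [h.ptgt_eq]; rfl

lemma exists_complete_of_long {p : PathDat Q} (hp : InG Q R p)
    (hlong : Fintype.card Q.A < p.2.length) : ∃ C, Complete Q R C := by
  classical
  set l := p.2 with hl
  have hnd : ¬ l.Nodup := fun h => by have := h.length_le_card; omega
  rw [List.nodup_iff_injective_get] at hnd
  unfold Function.Injective at hnd
  push_neg at hnd
  obtain ⟨i, j, hij, hne⟩ := hnd
  -- wlog i < j
  have key : ∀ (i j : Fin l.length), i < j → l.get i = l.get j → ∃ C, Complete Q R C := by
    intro i j hlt hij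
    have hchainE : l.Chain' (fun a b => Q.tgt a = Q.src b) := hp.1.1
    have hchainR : l.Chain' (fun a b => (a, b) ∈ R) := hp.2
    have hiv : (i : ℕ) < l.length := i.2
    have hjv : (j : ℕ) < l.length := j.2
    set d : ℕ := (j : ℕ) - (i : ℕ) with hd
    have hdpos : 0 < d := by omega
    set seg : List Q.A := (l.drop i).take d with hseg
    have hseglen : seg.length = d := by
      simp [hseg, List.length_take, List.length_drop]; omega
    have hsegget : ∀ t (ht : t < d), seg[t]'(by omega) = l[(i : ℕ) + t]'(by omega) := by
      intro t ht
      simp only [hseg]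
      rw [List.getElem_take, List.getElem_drop]
    have hrel : ∀ t, (htl : t < l.length - 1) → Rel Q R (l[t]'(by omega)) (l[t+1]'(by omega)) := by
      intro t htl
      simp only [List.Chain'] at hchainE hchainR
      rw [List.isChain_iff_getElem] at hchainE hchainR
      exact ⟨by simpa using hchainE t (by omega), by simpa using hchainR t (by omega)⟩
    have hdup : l[(j : ℕ)]'hjv = l[(i : ℕ)]'hiv := by
      simpa using hij.symm
    refine ⟨(Q.src (l[(i : ℕ)]'hiv), seg), ?_⟩
    apply CyP.complete
    refine ⟨by rw [← List.length_pos_iff, hseglen]; omega, ?_, ?_⟩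
    · intro h'
      rw [List.head_eq_getElem]
      have := hsegget 0 (by omega)
      simp only [this, Nat.add_zero]
    · intro t ht
      rw [hseglen] at ht
      have hgt := hsegget t ht
      by_cases hc : t + 1 < d
      · have hgt1 := hsegget (t+1) hc
        have : (t + 1) % seg.length = t + 1 := by rw [hseglen]; exact Nat.mod_eq_of_lt hc
        simp only [this, hgt, hgt1]
        have hr := hrel ((i : ℕ) + t) (by omega)
        convert hr using 2 <;> omega
      · have heq : t + 1 = d := by omega
        have : (t + 1) % seg.length = 0 := by rw [hseglen, heq, Nat.mod_self]
        simp only [this, hgt, hsegget 0 hdpos]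
        have hr := hrel ((j : ℕ) - 1) (by omega)
        simp only [show (j : ℕ) - 1 + 1 = (j : ℕ) from by omega, hdup] at hr
        simpa only [show (i : ℕ) + t = (j : ℕ) - 1 from by omega, Nat.add_zero] using hr
  rcases lt_or_gt_of_ne hne with h | h
  · exact key i j h hij
  · exact key j i h hij.symm

end Aux
section Aux2

variable {Q : Quiv} {R : Set (Q.A × Q.A)}

lemma getElem_idx {α : Type} (l : List α) {a b : ℕ} (h : a = b) (ha : a < l.length) :
    l[a]'ha = l[b]'(h ▸ ha) := by subst h; rfl

lemma rotP_eq {p : PathDat Q} {a : Q.A} (h : p.2.getLast? = some a) :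
    rotP Q p = (Q.src a, a :: p.2.dropLast) := by
  unfold rotP
  rw [h]

variable (k : Type) [Field k]

/-- The "forward extension" basis vector attached to a cyclic path. -/
noncomputable def Tf (Q : Quiv) (R : Set (Q.A × Q.A)) (m : ℕ) (γ : PathDat Q) :
    Coch k Q R m :=
  bv k Q R m ((γ.1, γ.2 ++ γ.2.take 1), (γ.1, γ.2.take 1))

lemma bv_eq_single {m : ℕ} {x : PathDat Q × PathDat Q} (h : GBmem Q R m x) :
    bv k Q R m x = Finsupp.single (⟨x, h⟩ : GB Q R m) 1 := dif_pos h

lemma dLin_bv {m : ℕ} {x : PathDat Q × PathDat Q} (h : GBmem Q R m x) :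
    dLin k Q R m (bv k Q R m x) = dB k Q R m ⟨x, h⟩ := by
  rw [bv_eq_single k h]
  unfold dLin
  rw [Finsupp.linearCombination_single, one_smul]

lemma dB_cyc (hgen : IsGentle Q R) {m : ℕ} {γ : PathDat Q} (hcy : CyP Q R γ)
    (hlen : γ.2.length = m) (h : GBmem Q R m (γ, (γ.1, []))) :
    dB k Q R m ⟨(γ, (γ.1, [])), h⟩ =
      Tf k Q R (m + 1) γ - ((-1 : k) ^ m) • Tf k Q R (m + 1) (rotP Q γ) := by
  classical
  have hne := hcy.1
  set c1 := γ.2.head hne with hc1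
  set cL := γ.2.getLast hne with hcL
  have hwrap : Rel Q R cL c1 := hcy.2.2.wrap hne
  have hsrc : γ.1 = Q.src c1 := hcy.2.1 hne
  have hhead? : γ.2.head? = some c1 := List.head?_eq_head hne
  have hlast? : γ.2.getLast? = some cL := List.getLast?_eq_getLast hne
  have hchE : γ.2.Chain' (fun a b => Q.tgt a = Q.src b) := hcy.ok.1
  have hchR : γ.2.Chain' (fun a b => (a, b) ∈ R) := hcy.inG.2
  have htake : γ.2.take 1 = [c1] := by
    obtain ⟨a, tl, e⟩ := List.exists_cons_of_ne_nil hne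
    rw [hc1]
    simp [e]
  have hrot : rotP Q γ = (Q.src cL, cL :: γ.2.dropLast) := rotP_eq hlast?
  -- the two target basis vectors, in explicit form
  have hTf1 : Tf k Q R (m + 1) γ =
      bv k Q R (m + 1) ((γ.1, γ.2 ++ [c1]), (γ.1, [c1])) := by
    unfold Tf; rw [htake]
  have hTf2 : Tf k Q R (m + 1) (rotP Q γ) =
      bv k Q R (m + 1) ((Q.src cL, cL :: γ.2), (Q.src cL, [cL])) := by
    rw [hrot]; unfold Tf
    simp only [List.take_succ_cons, List.take_zero, List.cons_append,
      List.dropLast_append_getLast hne]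
    rw [hcL, List.dropLast_append_getLast hne]
  -- membership of the left-extension pair
  have hmemL : GBmem Q R (m + 1) ((γ.1, γ.2 ++ [c1]), (γ.1, [c1])) := by
    refine ⟨⟨⟨?_, ?_⟩, ?_⟩, ?_, ⟨⟨List.isChain_singleton _, ?_⟩, List.isChain_singleton _⟩, rfl, ?_⟩
    · simp only [List.Chain']
      rw [List.isChain_append]
      refine ⟨hchE, List.isChain_singleton _, ?_⟩
      simp only [hlast?, List.head?_cons, Option.mem_def, Option.some.injEq]
      rintro x rfl y rfl
      exact hwrap.1
    · intro a ha
      simp only [List.head?_append, hhead?, Option.or_some, Option.some_or, Option.mem_def,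
        Option.some.injEq] at ha
      rw [← ha, ← hsrc]
    · simp only [List.Chain']
      rw [List.isChain_append]
      refine ⟨hchR, List.isChain_singleton _, ?_⟩
      simp only [hlast?, List.head?_cons, Option.mem_def, Option.some.injEq]
      rintro x rfl y rfl
      exact hwrap.2
    · show (γ.2 ++ [c1]).length = m + 1
      simp [hlen]
    · intro a ha
      simp only [List.head?_cons, Option.mem_def, Option.some.injEq] at ha
      rw [← ha, ← hsrc]
    · show ptgt Q (γ.1, γ.2 ++ [c1]) = ptgt Q (γ.1, [c1])
      unfold ptgt
      simp [List.getLast?_concat]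
  -- membership of the right-extension pair
  have hmemR : GBmem Q R (m + 1) ((Q.src cL, cL :: γ.2), (Q.src cL, [cL])) := by
    refine ⟨⟨⟨?_, ?_⟩, ?_⟩, ?_, ⟨⟨List.isChain_singleton _, ?_⟩, List.isChain_singleton _⟩, rfl, ?_⟩
    · simp only [List.Chain']
      rw [List.isChain_cons]
      refine ⟨?_, hchE⟩
      intro y hy
      simp only [hhead?, Option.mem_def, Option.some.injEq] at hy
      rw [← hy]; exact hwrap.1
    · intro a ha
      simp only [List.head?_cons, Option.mem_def, Option.some.injEq] at ha
      rw [← ha]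
    · simp only [List.Chain']
      rw [List.isChain_cons]
      refine ⟨?_, hchR⟩
      intro y hy
      simp only [hhead?, Option.mem_def, Option.some.injEq] at hy
      rw [← hy]; exact hwrap.2
    · show (cL :: γ.2).length = m + 1
      simp [hlen]
    · intro a ha
      simp only [List.head?_cons, Option.mem_def, Option.some.injEq] at ha
      rw [← ha]
    · show ptgt Q (Q.src cL, cL :: γ.2) = ptgt Q (Q.src cL, [cL])
      unfold ptgt
      rw [List.getLast?_eq_getLast (List.cons_ne_nil _ _), List.getLast_cons hne,
        List.getLast?_eq_getLast (List.cons_ne_nil _ _)]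
      simp [← hcL]
  -- uniqueness of the extending arrows
  have huniqL : ∀ b : Q.A,
      GBmem Q R (m + 1) (extL Q b γ, extL Q b (γ.1, [])) → b = c1 := by
    intro b hb
    obtain ⟨⟨⟨hbE, _⟩, hbR⟩, _⟩ := hb
    simp only [extL] at hbE hbR
    simp only [List.Chain'] at hbE hbR
    rw [List.isChain_append] at hbE hbR
    have h1 : Q.tgt cL = Q.src b := by
      refine hbE.2.2 cL ?_ b ?_ <;> simp [hlast?]
    have h2 : (cL, b) ∈ R := by
      refine hbR.2.2 cL ?_ b ?_ <;> simp [hlast?]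
    exact hgen.uniqRelAfter cL ⟨h1, h2⟩ ⟨hwrap.1, hwrap.2⟩
  have huniqR : ∀ a : Q.A,
      GBmem Q R (m + 1) (extR Q a γ, extR Q a (γ.1, [])) → a = cL := by
    intro a ha
    obtain ⟨⟨⟨haE, _⟩, haR⟩, _⟩ := ha
    simp only [extR] at haE haR
    simp only [List.Chain'] at haE haR
    rw [List.isChain_cons] at haE haR
    have h1 : Q.tgt a = Q.src c1 := haE.1 c1 (by simp [hhead?])
    have h2 : (a, c1) ∈ R := haR.1 c1 (by simp [hhead?])
    exact hgen.uniqRelBefore c1 ⟨h1, h2⟩ ⟨hwrap.1, hwrap.2⟩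
  -- compute the two sums in the differential
  unfold dB
  rw [hTf1, hTf2]
  congr 1
  · rw [Finset.sum_eq_single_of_mem c1 (Finset.mem_univ _)]
    · rw [dif_pos (show GBmem Q R (m + 1) (extL Q c1 γ, extL Q c1 (γ.1, [])) from hmemL)]
      rw [bv_eq_single k hmemL]
      rfl
    · intro b _ hbne
      rw [dif_neg]
      intro hb
      exact hbne (huniqL b hb)
  · congr 1
    rw [Finset.sum_eq_single_of_mem cL (Finset.mem_univ _)]
    · have hcond : Q.tgt cL = psrc Q γ ∧
          GBmem Q R (m + 1) (extR Q cL γ, extR Q cL (γ.1, [])) := by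
        constructor
        · show Q.tgt cL = γ.1
          rw [hsrc]; exact hwrap.1
        · exact hmemR
      rw [dif_pos hcond]
      rw [bv_eq_single k hmemR]
      rfl
    · intro a _ hane
      rw [dif_neg]
      rintro ⟨-, ha⟩
      exact hane (huniqR a ha)

end Aux2
section Aux3

variable {Q : Quiv} {R : Set (Q.A × Q.A)} (k : Type) [Field k]

lemma dB_apply_triv {m : ℕ} (y : GB Q R m) (x₀ : GB Q R (m + 1))
    (hx : x₀.val.2.2 = []) : dB k Q R m y x₀ = 0 := by
  classical
  unfold dB
  rw [Finsupp.sub_apply, Finsupp.smul_apply, Finsupp.finset_sum_apply,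
    Finsupp.finset_sum_apply]
  have h1 : ∀ b : Q.A,
      (if h : GBmem Q R (m + 1) (extL Q b y.val.1, extL Q b y.val.2) then
        Finsupp.single (⟨_, h⟩ : GB Q R (m + 1)) (1 : k) else 0) x₀ = 0 := by
    intro b
    by_cases hb : GBmem Q R (m + 1) (extL Q b y.val.1, extL Q b y.val.2)
    · rw [dif_pos hb, Finsupp.single_apply, if_neg]
      intro hcon
      have := congrArg (fun w : GB Q R (m + 1) => w.val.2.2) hcon
      simp only [extL] at this
      rw [hx] at this
      exact absurd this (by simp)
    · rw [dif_neg hb]; rfl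
  have h2 : ∀ a : Q.A,
      (if h : Q.tgt a = psrc Q y.val.1 ∧
          GBmem Q R (m + 1) (extR Q a y.val.1, extR Q a y.val.2) then
        Finsupp.single (⟨_, h.2⟩ : GB Q R (m + 1)) (1 : k) else 0) x₀ = 0 := by
    intro a
    by_cases ha : Q.tgt a = psrc Q y.val.1 ∧
        GBmem Q R (m + 1) (extR Q a y.val.1, extR Q a y.val.2)
    · rw [dif_pos ha, Finsupp.single_apply, if_neg]
      intro hcon
      have := congrArg (fun w : GB Q R (m + 1) => w.val.2.2) hcon
      simp only [extR] at this
      rw [hx] at this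
      exact absurd this (by simp)
    · rw [dif_neg ha]; rfl
  rw [Finset.sum_congr rfl fun b _ => h1 b, Finset.sum_congr rfl fun a _ => h2 a]
  simp

lemma not_cohomIsZero_of {m : ℕ} (hm : 1 ≤ m) (z : Coch k Q R m)
    (hz : dLin k Q R m z = 0) (x₀ : GB Q R m) (hx : x₀.val.2.2 = [])
    (hval : z x₀ ≠ 0) : ¬ CohomIsZero k Q R m := by
  cases m with
  | zero => omega
  | succ m' =>
    intro hcoh
    have hzmem : z ∈ cocSp k Q R (m' + 1) := LinearMap.mem_ker.mpr hz
    have hmem := hcoh hzmem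
    rw [show cobSp k Q R (m' + 1) = LinearMap.range (dLin k Q R m') from rfl] at hmem
    obtain ⟨w, hw⟩ := hmem
    apply hval
    rw [← hw]
    unfold dLin
    rw [Finsupp.linearCombination_apply, Finsupp.sum_apply, Finsupp.sum]
    apply Finset.sum_eq_zero
    intro y _
    rw [Finsupp.smul_apply, dB_apply_triv k y x₀ hx, smul_zero]

end Aux3
section Aux4

variable {Q : Quiv} {R : Set (Q.A × Q.A)} (k : Type) [Field k]

lemma not_cohom_vanish (hgen : IsGentle Q R) {C : PathDat Q} (hC : Complete Q R C) :
    ¬ ∃ m₀ : ℕ, ∀ m : ℕ, m₀ ≤ m → CohomIsZero k Q R m := by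
  classical
  rintro ⟨m₀, hv⟩
  have hcy := hC.cyP
  have hl0 : C.2 ≠ [] := hcy.1
  have hl0pos : 0 < C.2.length := List.length_pos_iff.mpr hl0
  set n := 2 * (m₀ + 1) with hn
  set l := powL C.2 n with hldef
  set m := l.length with hmdef
  have hm : m = n * C.2.length := powL_length _ _
  have hm1 : 1 ≤ m := by
    rw [hm, hn]; exact Nat.mul_pos (by omega) hl0pos
  have hmeven : Even m := by
    refine ⟨(m₀ + 1) * C.2.length, ?_⟩
    rw [hm, hn]; ring
  have hm0 : m₀ ≤ m := by
    calc m₀ ≤ n := by omega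
    _ = n * 1 := (Nat.mul_one n).symm
    _ ≤ n * C.2.length := Nat.mul_le_mul_left n hl0pos
    _ = m := hm.symm
  have hD : CyP Q R (C.1, l) := hcy.pow n (by omega)
  have hlne : l ≠ [] := hD.1
  -- the cyclic shifts of `l`
  set shf : ℕ → PathDat Q :=
    fun i => (((l.drop i).head?).elim C.1 Q.src, l.drop i ++ l.take i) with hshf
  have lenshf : ∀ i, (shf i).2.length = m := by
    intro i
    simp only [hshf, List.length_append, List.length_drop, List.length_take]
    omega
  have hget : ∀ i t, i < m → ∀ (ht : t < (shf i).2.length),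
      (shf i).2[t] = l[(i + t) % m]'(Nat.mod_lt _ (by omega)) := by
    intro i t hi ht
    rw [lenshf] at ht
    simp only [hshf]
    by_cases hc : t < m - i
    · have h1 : t < (l.drop i).length := by rw [List.length_drop]; omega
      rw [List.getElem_append_left h1, List.getElem_drop]
      exact getElem_idx l (by rw [Nat.mod_eq_of_lt (by omega)]) _
    · push_neg at hc
      have h1 : (l.drop i).length ≤ t := by rw [List.length_drop]; omega
      have h2 : t - (l.drop i).length < (l.take i).length := by
        rw [List.length_drop, List.length_take]; omega
      rw [List.getElem_append_right h1, List.getElem_take]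
      refine getElem_idx l ?_ _
      rw [List.length_drop]
      rw [Nat.mod_eq_sub_mod (by omega), Nat.mod_eq_of_lt (by omega)]
      omega
  have hcyshf : ∀ i, i < m → CyP Q R (shf i) := by
    intro i hi
    have hnei : (shf i).2 ≠ [] := by
      rw [← List.length_pos_iff, lenshf]; omega
    refine ⟨hnei, ?_, ?_⟩
    · intro h'
      rw [List.head_eq_getElem, hget i 0 hi (by rw [lenshf]; omega)]
      show ((l.drop i).head?).elim C.1 Q.src = _
      rw [List.head?_drop, List.getElem?_eq_getElem (by omega : i < l.length)]
      simp only [Option.elim]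
      congr 1
      exact getElem_idx l (by rw [Nat.add_zero, Nat.mod_eq_of_lt hi]) _
    · intro t ht
      have ht' : t < m := by rw [← lenshf i]; exact ht
      rw [hget i t hi ht]
      have hmod : (t + 1) % (shf i).2.length < (shf i).2.length :=
        Nat.mod_lt _ (by rw [lenshf]; omega)
      rw [hget i ((t + 1) % (shf i).2.length) hi hmod]
      have key := hD.2.2 ((i + t) % m) (Nat.mod_lt _ (by omega))
      have e1 : ((i + t) % m + 1) % l.length = (i + t + 1) % m := by
        rw [← hmdef, Nat.mod_add_mod]
      have e2 : (i + (t + 1) % (shf i).2.length) % m = (i + t + 1) % m := by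
        rw [lenshf, Nat.add_mod_mod, ← Nat.add_assoc]
      rw [getElem_idx l e2 _]
      convert key using 2
      exact e1.symm
  -- rotation permutes the shifts
  have hshf0 : shf 0 = (C.1, l) := by
    simp only [hshf, List.drop_zero, List.take_zero, List.append_nil]
    congr 1
    rw [List.head?_eq_head hlne]
    exact (hD.2.1 hlne).symm
  have rot_shf : ∀ j, j < m → rotP Q (shf j) = shf ((j + (m - 1)) % m) := by
    intro j hj
    rcases Nat.eq_zero_or_pos j with rfl | hjpos
    · have e0 : (0 + (m - 1)) % m = m - 1 := by
        rw [Nat.zero_add, Nat.mod_eq_of_lt (by omega)]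
      rw [hshf0, e0]
      have hlast : l.getLast? = some (l[m - 1]'(by omega)) := by
        rw [List.getLast?_eq_getLast hlne, List.getLast_eq_getElem]
      rw [rotP_eq hlast]
      have hdrop : l.drop (m - 1) = [l[m - 1]'(by omega)] := by
        rw [List.drop_eq_getElem_cons (by omega : m - 1 < l.length)]
        have : m - 1 + 1 = l.length := by omega
        rw [this, List.drop_length]
      simp only [hshf, hdrop, Prod.mk.injEq]
      refine ⟨by simp, ?_⟩
      rw [List.dropLast_eq_take, List.singleton_append]
    · have htkne : l.take j ≠ [] := by
        rw [← List.length_pos_iff, List.length_take]; omega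
      have hlastj : (shf j).2.getLast? = some (l[j - 1]'(by omega)) := by
        simp only [hshf]
        rw [List.getLast?_append_of_ne_nil _ htkne,
          List.getLast?_eq_getLast htkne, List.getLast_eq_getElem]
        congr 1
        rw [List.getElem_take]
        exact getElem_idx l (by rw [List.length_take]; omega) _
      rw [rotP_eq hlastj]
      have ej : (j + (m - 1)) % m = j - 1 := by
        rw [show j + (m - 1) = (j - 1) + m by omega, Nat.add_mod_right,
          Nat.mod_eq_of_lt (by omega)]
      rw [ej]
      have hdl : (shf j).2.dropLast = l.drop j ++ l.take (j - 1) := by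
        simp only [hshf]
        rw [List.dropLast_append_of_ne_nil htkne]
        congr 1
        rw [List.dropLast_eq_take, List.take_take, List.length_take]
        congr 1
        omega
      rw [hdl]
      have hdropj : l.drop (j - 1) = l[j - 1]'(by omega) :: l.drop j := by
        rw [List.drop_eq_getElem_cons (by omega : j - 1 < l.length)]
        congr 2
        omega
      simp only [hshf, hdropj, Prod.mk.injEq]
      refine ⟨by simp, ?_⟩
      rw [List.cons_append]
  have rotIter : ∀ s j, j < m → (rotP Q)^[s] (shf j) = shf ((j + s * (m - 1)) % m) := by
    intro s
    induction s with
    | zero =>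
      intro j hj
      simp [Nat.mod_eq_of_lt hj]
    | succ s ih =>
      intro j hj
      rw [Function.iterate_succ_apply, rot_shf j hj,
        ih _ (Nat.mod_lt _ (by omega))]
      congr 1
      rw [Nat.mod_add_mod]
      congr 1
      ring
  set O : Finset (PathDat Q) := (Finset.range m).image shf with hO
  have hmemO : ∀ γ ∈ O, CyP Q R γ ∧ γ.2.length = m := by
    intro γ hγ
    simp only [hO, Finset.mem_image, Finset.mem_range] at hγ
    obtain ⟨i, hi, rfl⟩ := hγ
    exact ⟨hcyshf i hi, lenshf i⟩
  have hgb : ∀ γ ∈ O, GBmem Q R m (γ, (γ.1, [])) := by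
    intro γ hγ
    have h1 := (hmemO γ hγ).1.gbmem
    rwa [(hmemO γ hγ).2] at h1
  set z : Coch k Q R m := ∑ γ ∈ O, bv k Q R m (γ, (γ.1, [])) with hz
  -- z is a cocycle
  have hrotO : ∀ γ ∈ O, rotP Q γ ∈ O := by
    intro γ hγ
    simp only [hO, Finset.mem_image, Finset.mem_range] at hγ ⊢
    obtain ⟨i, hi, rfl⟩ := hγ
    exact ⟨(i + (m - 1)) % m, Nat.mod_lt _ (by omega), (rot_shf i hi).symm⟩
  have hiterO : ∀ γ ∈ O, (rotP Q)^[m - 1] γ ∈ O := by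
    intro γ hγ
    simp only [hO, Finset.mem_image, Finset.mem_range] at hγ ⊢
    obtain ⟨i, hi, rfl⟩ := hγ
    exact ⟨(i + (m - 1) * (m - 1)) % m, Nat.mod_lt _ (by omega),
      (rotIter (m - 1) i hi).symm⟩
  have hfull : ∀ j, j < m → (rotP Q)^[m] (shf j) = shf j := by
    intro j hj
    rw [rotIter m j hj]
    congr 1
    rw [Nat.add_mul_mod_self_left, Nat.mod_eq_of_lt hj]
  have hfull' : ∀ j, j < m → (rotP Q)^[m - 1 + 1] (shf j) = shf j := by
    intro j hj
    rw [show m - 1 + 1 = m from by omega]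
    exact hfull j hj
  have hji : ∀ γ ∈ O, (rotP Q)^[m - 1] (rotP Q γ) = γ := by
    intro γ hγ
    simp only [hO, Finset.mem_image, Finset.mem_range] at hγ
    obtain ⟨i, hi, rfl⟩ := hγ
    have h' := hfull' i hi
    rw [Function.iterate_succ_apply] at h'
    exact h'
  have hij : ∀ γ ∈ O, rotP Q ((rotP Q)^[m - 1] γ) = γ := by
    intro γ hγ
    simp only [hO, Finset.mem_image, Finset.mem_range] at hγ
    obtain ⟨i, hi, rfl⟩ := hγ
    have h' := hfull' i hi
    rw [Function.iterate_succ_apply'] at h'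
    exact h'
  have hdz : dLin k Q R m z = 0 := by
    rw [hz, map_sum]
    have hterm : ∀ γ ∈ O, dLin k Q R m (bv k Q R m (γ, (γ.1, []))) =
        Tf k Q R (m + 1) γ - ((-1 : k) ^ m) • Tf k Q R (m + 1) (rotP Q γ) := by
      intro γ hγ
      rw [dLin_bv k (hgb γ hγ)]
      exact dB_cyc k hgen (hmemO γ hγ).1 (hmemO γ hγ).2 _
    rw [Finset.sum_congr rfl hterm, Finset.sum_sub_distrib, ← Finset.smul_sum]
    have hbij : ∑ γ ∈ O, Tf k Q R (m + 1) (rotP Q γ) = ∑ γ ∈ O, Tf k Q R (m + 1) γ :=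
      Finset.sum_nbij' (fun γ => rotP Q γ) (fun γ => (rotP Q)^[m - 1] γ)
        hrotO hiterO hji hij (fun γ _ => rfl)
    rw [hbij, Even.neg_one_pow hmeven, one_smul, sub_self]
  -- z has coefficient 1 at the basis element (D, trivial path)
  have hD0 : (C.1, l) ∈ O := by
    rw [hO, Finset.mem_image]
    exact ⟨0, Finset.mem_range.mpr (by omega), hshf0⟩
  have hgbD : GBmem Q R m ((C.1, l), (C.1, [])) := hgb _ hD0
  set x₀ : GB Q R m := ⟨((C.1, l), (C.1, [])), hgbD⟩ with hx₀
  have hz1 : z x₀ = 1 := by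
    rw [hz, Finsupp.finset_sum_apply]
    have hterm : ∀ γ ∈ O, (bv k Q R m (γ, (γ.1, []))) x₀ =
        if γ = (C.1, l) then (1 : k) else 0 := by
      intro γ hγ
      rw [bv_eq_single k (hgb γ hγ), Finsupp.single_apply]
      by_cases hc : γ = (C.1, l)
      · subst hc
        rw [if_pos rfl, if_pos rfl]
      · rw [if_neg hc, if_neg]
        intro hcon
        apply hc
        have := congrArg (fun w : GB Q R m => w.val.1) hcon
        exact this
    rw [Finset.sum_congr rfl hterm, Finset.sum_ite_eq' O (C.1, l) (fun _ => (1 : k)),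
      if_pos hD0]
  have := not_cohomIsZero_of k hm1 z hdz x₀ rfl (by rw [hz1]; exact one_ne_zero)
  exact this (hv m hm0)

end Aux4
/-- For a gentle presentation `(Q, R)`, the following are
equivalent: `Γ_m = ∅` for all large `m` (i.e. `kQ/⟨R⟩` has finite global
dimension), `HH^m = 0` for all large `m`, and there is no complete cycle in
`(Q, R)`. -/
theorem finite_global_dimension_characterization (k : Type) [Field k] (Q : Quiv)
    (R : Set (Q.A × Q.A)) (hg : IsGentle Q R) :
    ((∃ m₀ : ℕ, ∀ p : PathDat Q, InG Q R p → plen Q p < m₀) ↔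
      (∃ m₀ : ℕ, ∀ m : ℕ, m₀ ≤ m → CohomIsZero k Q R m)) ∧
    ((∃ m₀ : ℕ, ∀ p : PathDat Q, InG Q R p → plen Q p < m₀) ↔
      ¬∃ C : PathDat Q, Complete Q R C) := by
  have hBC : (∃ m₀ : ℕ, ∀ p : PathDat Q, InG Q R p → plen Q p < m₀) ↔
      ¬∃ C : PathDat Q, Complete Q R C := by
    constructor
    · rintro ⟨m₀, hb⟩ ⟨C, hC⟩
      have hcy := hC.cyP
      have hpos : 0 < C.2.length := List.length_pos_iff.mpr hcy.1
      have hpow := (hcy.pow (m₀ + 1) (by omega)).inG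
      have hlt := hb _ hpow
      have hlen : plen Q (C.1, powL C.2 (m₀ + 1)) = (m₀ + 1) * C.2.length := by
        unfold plen
        exact powL_length _ _
      rw [hlen] at hlt
      have : m₀ + 1 ≤ (m₀ + 1) * C.2.length := Nat.le_mul_of_pos_right _ hpos
      omega
    · intro hnc
      refine ⟨Fintype.card Q.A + 1, ?_⟩
      intro p hp
      by_contra hlong
      push_neg at hlong
      exact hnc (exists_complete_of_long hp (by unfold plen at hlong; omega))
  refine ⟨⟨?_, ?_⟩, hBC⟩
  · rintro ⟨m₀, hb⟩
    refine ⟨m₀, fun m hm => ?_⟩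
    intro x hx
    have hx0 : x = 0 := by
      ext t
      exact absurd (hb t.val.1 t.prop.1) (by have h2 := t.prop.2.1; omega)
    rw [hx0]
    exact Submodule.zero_mem _
  · intro hcoh
    by_contra hnb
    have hnn : ¬¬∃ C : PathDat Q, Complete Q R C := fun h => hnb (hBC.mpr h)
    obtain ⟨C, hC⟩ := not_not.mp hnn
    exact not_cohom_vanish k hg hC hcoh

end GentleTT
end

section
/- Let (Q,R) be a quadratic monomial presentation, let C be a cocomplete circuit, let r be its period, and let C̄ be a cycle in C. Then for the subcomplex k(B⊙Γ)_C of k(B⊙Γ): (1) H_0(k(B⊙Γ)_C) is one-dimensional, spanned by the homology class of (C̄, s(C̄)), and this class is independent of the choice of C̄ in C; (2) H_1(k(B⊙Γ)_C) is one-dimensional, spanned by the class of ĥ(C̄) = Σ_{i=0}^{r−1} (r1(rot^i(C̄)), r2(rot^i(C̄))), which is again independent of the choice of C̄; (3) H_m(k(B⊙Γ)_C) = 0 for all m ≥ 2. -/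
/-!
Common framework: quivers, paths (as a start vertex together with a list of
composable arrows, listed in order of traversal, so that the paper's path
`c_m ⋯ c_1` corresponds to the list `[c_1, …, c_m]`), gentle and quadratic
monomial presentations, the cochain complex `k(Γ ∥ B)` and the chain complex
`k(B ⊙ Γ)` of the paper.
-/

namespace GentleTT

/-! ### Auxiliary lemmas -/

section Aux

variable (Q : Quiv)

/-- Composability relation on arrows. -/
def cmp (a b : Q.A) : Prop := Q.tgt a = Q.src b

/-- The canonical path on a nonempty list of arrows. -/
def mkC (l : List Q.A) (h : l ≠ []) : PathDat Q := (Q.src (l.head h), l)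

lemma mkC_snd (l : List Q.A) (h : l ≠ []) : (mkC Q l h).2 = l := rfl

lemma mkC_congr {l l' : List Q.A} (h : l ≠ []) (h' : l' ≠ []) (e : l = l') :
    mkC Q l h = mkC Q l' h' := by subst e; rfl

lemma ok_mkC {l : List Q.A} (h : l ≠ []) (hc : l.Chain' (cmp Q)) : Ok Q (mkC Q l h) := by
  refine ⟨hc, ?_⟩
  intro a ha
  rw [show (mkC Q l h).2 = l from rfl, List.head?_eq_head h] at ha
  simp only [Option.mem_def, Option.some.injEq] at ha
  subst ha; rfl

lemma ptgt_eq_getLast (p : PathDat Q) (h : p.2 ≠ []) :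
    ptgt Q p = Q.tgt (p.2.getLast h) := by
  simp [ptgt, List.getLast?_eq_getLast h]

lemma ptgt_nil (v : Q.V) : ptgt Q (v, ([] : List Q.A)) = v := rfl

lemma chain'_sq {α : Type} {S : α → α → Prop} {l : List α} :
    (l ++ l).Chain' S ↔
      l.Chain' S ∧ ∀ x ∈ l.getLast?, ∀ y ∈ l.head?, S x y := by
  unfold List.Chain'
  rw [List.isChain_append]
  tauto

lemma cycle_mkC {l : List Q.A} (h : l ≠ []) (hc : (l ++ l).Chain' (cmp Q)) :
    IsCycle Q (mkC Q l h) := by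
  rcases chain'_sq.mp hc with ⟨h1, h2⟩
  refine ⟨ok_mkC Q h h1, h, ?_⟩
  show Q.src (l.head h) = ptgt Q (mkC Q l h)
  rw [ptgt_eq_getLast Q _ h]
  exact (h2 _ (by rw [List.getLast?_eq_getLast h]; rfl) _ (by rw [List.head?_eq_head h]; rfl)).symm

lemma eq_mkC {p : PathDat Q} (hok : Ok Q p) (h : p.2 ≠ []) : p = mkC Q p.2 h := by
  have := hok.2 (p.2.head h) (by simp [List.head?_eq_head h])
  exact Prod.ext this.symm rfl

lemma rotP_mkC {l : List Q.A} (h : l ≠ []) :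
    rotP Q (mkC Q l h) = mkC Q (l.rotate (l.length - 1))
      (by simpa using h) := by
  have hd : l.dropLast ++ [l.getLast h] = l := List.dropLast_append_getLast h
  have hrot : l.rotate (l.length - 1) = l.getLast h :: l.dropLast := by
    obtain ⟨d, a, rfl⟩ : ∃ d a, l = d ++ [a] := by
      rcases List.eq_nil_or_concat l with h' | ⟨d, a, h'⟩
      · exact absurd h' h
      · exact ⟨d, a, by simpa [List.concat_eq_append] using h'⟩
    have h1 : (d ++ [a]).length - 1 = d.length := by simp
    rw [h1, List.rotate_eq_drop_append_take (by simp), List.drop_left, List.take_left]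
    simp [List.dropLast_concat]
  have hg : (mkC Q l h).2.getLast? = some (l.getLast h) := List.getLast?_eq_getLast h
  have hh : (l.getLast h :: l.dropLast) ≠ [] := by simp
  rw [rotP, hg]
  exact (mkC_congr Q hh _ hrot.symm)

lemma rotI_mkC {l : List Q.A} (h : l ≠ []) (i : ℕ) :
    rotI Q i (mkC Q l h) = mkC Q (l.rotate ((l.length - 1) * i))
      (by simpa using h) := by
  induction i with
  | zero => simp [rotI, mkC_congr Q h _ (l.rotate_zero).symm]
  | succ i ih =>
    rw [rotI, Function.iterate_succ_apply', ← rotI, ih, rotP_mkC]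
    apply mkC_congr
    rw [List.length_rotate, List.rotate_rotate]
    ring_nf

lemma rotate_mul_length {α : Type} (l : List α) (k : ℕ) : l.rotate (l.length * k) = l := by
  induction k with
  | zero => simp
  | succ k ih =>
    rw [Nat.mul_succ, ← List.rotate_rotate, ih, List.rotate_length]

end Aux

section Circ

variable (Q : Quiv) (R : Set (Q.A × Q.A)) (c : PathDat Q)

lemma c_ne (hcc : Cocomplete Q R c) : c.2 ≠ [] := hcc.1.2.1

lemma n_pos (hcc : Cocomplete Q R c) : 0 < c.2.length :=
  List.length_pos_iff.mpr (c_ne Q R c hcc)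

lemma pow2_snd : (powP Q c 2).2 = c.2 ++ c.2 := by
  show powL c.2 2 = c.2 ++ c.2
  simp [powL]

lemma chain_cmp_sq (hcc : Cocomplete Q R c) : (c.2 ++ c.2).Chain' (cmp Q) := by
  have := hcc.2.1.1
  rw [pow2_snd] at this
  exact this

lemma chain_nR_sq (hcc : Cocomplete Q R c) :
    (c.2 ++ c.2).Chain' (fun a b => (a, b) ∉ R) := by
  have := hcc.2.2
  rw [pow2_snd] at this
  exact this

lemma c_eq_mkC (hcc : Cocomplete Q R c) : c = mkC Q c.2 (c_ne Q R c hcc) :=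
  eq_mkC Q hcc.1.1 _

lemma rot_infix (u : ℕ) (hcc : Cocomplete Q R c) :
    c.2.rotate u <:+: c.2 ++ c.2 := by
  rw [← List.rotate_mod]
  set v := u % c.2.length with hv
  have hvlt : v ≤ c.2.length := (Nat.mod_lt u (n_pos Q R c hcc)).le
  rw [List.rotate_eq_drop_append_take hvlt]
  refine ⟨c.2.take v, c.2.drop v, ?_⟩
  have hsplit : c.2 = c.2.take v ++ c.2.drop v := (List.take_append_drop v c.2).symm
  generalize ha : c.2.take v = a at hsplit ⊢
  generalize hb : c.2.drop v = b at hsplit ⊢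
  rw [hsplit]
  simp [List.append_assoc]

lemma rotsq_infix (u : ℕ) (hcc : Cocomplete Q R c) :
    (c.2.rotate u) ++ (c.2.rotate u) <:+: c.2 ++ c.2 ++ c.2 := by
  rw [← List.rotate_mod]
  set v := u % c.2.length with hv
  have hvlt : v ≤ c.2.length := (Nat.mod_lt u (n_pos Q R c hcc)).le
  rw [List.rotate_eq_drop_append_take hvlt]
  refine ⟨c.2.take v, c.2.drop v, ?_⟩
  have hsplit : c.2 = c.2.take v ++ c.2.drop v := (List.take_append_drop v c.2).symm
  generalize ha : c.2.take v = a at hsplit ⊢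
  generalize hb : c.2.drop v = b at hsplit ⊢
  rw [hsplit]
  simp [List.append_assoc]

lemma chain_cmp_cube (hcc : Cocomplete Q R c) :
    (c.2 ++ c.2 ++ c.2).Chain' (cmp Q) := by
  have h2 := chain_cmp_sq Q R c hcc
  rcases chain'_sq.mp h2 with ⟨h1, hj⟩
  unfold List.Chain'
  rw [List.append_assoc, List.isChain_append]
  refine ⟨h1, h2, ?_⟩
  intro x hx y hy
  apply hj x hx y
  rcases List.exists_cons_of_ne_nil (c_ne Q R c hcc) with ⟨b, t, hb⟩
  rw [hb] at hy ⊢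
  simpa using hy

lemma rot_ne (u : ℕ) (hcc : Cocomplete Q R c) : c.2.rotate u ≠ [] := by
  simp [c_ne Q R c hcc]

lemma chain_cmp_rot (u : ℕ) (hcc : Cocomplete Q R c) :
    (c.2.rotate u).Chain' (cmp Q) :=
  (chain_cmp_sq Q R c hcc).infix (rot_infix Q R c u hcc)

lemma chain_nR_rot (u : ℕ) (hcc : Cocomplete Q R c) :
    (c.2.rotate u).Chain' (fun a b => (a, b) ∉ R) :=
  (chain_nR_sq Q R c hcc).infix (rot_infix Q R c u hcc)

lemma chain_cmp_rotsq (u : ℕ) (hcc : Cocomplete Q R c) :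
    ((c.2.rotate u) ++ (c.2.rotate u)).Chain' (cmp Q) :=
  (chain_cmp_cube Q R c hcc).infix (rotsq_infix Q R c u hcc)

lemma cyc_rot (u : ℕ) (hcc : Cocomplete Q R c) :
    IsCycle Q (mkC Q (c.2.rotate u) (rot_ne Q R c u hcc)) :=
  cycle_mkC Q _ (chain_cmp_rotsq Q R c u hcc)

lemma inB_rot (u : ℕ) (hcc : Cocomplete Q R c) :
    InB Q R (mkC Q (c.2.rotate u) (rot_ne Q R c u hcc)) :=
  ⟨ok_mkC Q _ (chain_cmp_rot Q R c u hcc), chain_nR_rot Q R c u hcc⟩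

lemma rho_eq (j : ℕ) (hcc : Cocomplete Q R c) :
    rotI Q j c = mkC Q (c.2.rotate ((c.2.length - 1) * j))
      (rot_ne Q R c _ hcc) := by
  conv_lhs => rw [c_eq_mkC Q R c hcc]
  exact rotI_mkC Q _ j

lemma rot_mul_n (t : ℕ) (hcc : Cocomplete Q R c) : rotI Q (c.2.length * t) c = c := by
  rw [rho_eq Q R c _ hcc]
  have harith : (c.2.length - 1) * (c.2.length * t) = c.2.length * ((c.2.length - 1) * t) := by
    ring
  have hlists : c.2.rotate ((c.2.length - 1) * (c.2.length * t)) = c.2 := by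
    rw [harith, rotate_mul_length]
  exact (mkC_congr Q _ (c_ne Q R c hcc) hlists).trans (c_eq_mkC Q R c hcc).symm

lemma rot_add (a b : ℕ) (p : PathDat Q) : rotI Q (a + b) p = rotI Q a (rotI Q b p) :=
  Function.iterate_add_apply _ a b p

lemma classC (hcc : Cocomplete Q R c) {p : PathDat Q} (hp : IsCycle Q p)
    (hre : RotEquiv Q p c) :
    ∃ u, p = mkC Q (c.2.rotate u) (rot_ne Q R c u hcc) := by
  obtain ⟨i, hi⟩ := hre
  have hp2 : p.2 ≠ [] := hp.2.1
  have hpm : p = mkC Q p.2 hp2 := eq_mkC Q hp.1 hp2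
  rw [hpm, rotI_mkC Q hp2 i] at hi
  set t := (p.2.length - 1) * i with ht
  have hlists : p.2.rotate t = c.2 := congrArg Prod.snd hi
  have hlen : p.2.length = c.2.length := by
    rw [← List.length_rotate p.2 t, hlists]
  have hnpos : 0 < p.2.length := List.length_pos_iff.mpr hp2
  refine ⟨p.2.length * t - t, ?_⟩
  have key : c.2.rotate (p.2.length * t - t) = p.2 := by
    rw [← hlists, List.rotate_rotate]
    have : t + (p.2.length * t - t) = p.2.length * t := by
      have : t ≤ p.2.length * t := Nat.le_mul_of_pos_left t hnpos
      omega
    rw [this, rotate_mul_length]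
  rw [hpm]
  exact mkC_congr Q _ _ key.symm

lemma arith1 (n u : ℕ) (h2 : 2 ≤ n) :
    (n - 1) * ((n - 1) * u) = n * ((n - 2) * u) + u := by
  obtain ⟨m, rfl⟩ : ∃ m, n = m + 2 := ⟨n - 2, by omega⟩
  have e1 : m + 2 - 1 = m + 1 := by omega
  have e2 : m + 2 - 2 = m := by omega
  rw [e1, e2]
  ring

lemma mkCrot_eq_rho (u : ℕ) (hcc : Cocomplete Q R c) :
    ∃ j, mkC Q (c.2.rotate u) (rot_ne Q R c u hcc) = rotI Q j c := by
  have hnpos : 0 < c.2.length := n_pos Q R c hcc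
  rcases Nat.lt_or_ge c.2.length 2 with h1 | h2
  · -- length 1
    have hn1 : c.2.length = 1 := by omega
    refine ⟨0, ?_⟩
    have hl : c.2.rotate u = c.2 := by
      rw [← List.rotate_mod, hn1, Nat.mod_one, List.rotate_zero]
    have h0 : rotI Q 0 c = c := rfl
    rw [h0]
    exact (mkC_congr Q _ (c_ne Q R c hcc) hl).trans (c_eq_mkC Q R c hcc).symm
  · refine ⟨(c.2.length - 1) * u, ?_⟩
    rw [rho_eq Q R c _ hcc]
    apply mkC_congr
    rw [arith1 _ u h2, ← List.rotate_rotate, rotate_mul_length]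

lemma classRho (hcc : Cocomplete Q R c) {p : PathDat Q} (hp : IsCycle Q p)
    (hre : RotEquiv Q p c) : ∃ j, p = rotI Q j c := by
  obtain ⟨u, hu⟩ := classC Q R c hcc hp hre
  obtain ⟨j, hj⟩ := mkCrot_eq_rho Q R c u hcc
  exact ⟨j, hu.trans hj⟩

lemma per_spec (hcc : Cocomplete Q R c) :
    1 ≤ periodP Q c ∧ rotI Q (periodP Q c) c = c := by
  have hne : {i : ℕ | 1 ≤ i ∧ rotI Q i c = c}.Nonempty := by
    refine ⟨c.2.length, n_pos Q R c hcc, ?_⟩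
    have := rot_mul_n Q R c 1 hcc
    rwa [Nat.mul_one] at this
  exact Nat.sInf_mem hne

lemma per_le_n (hcc : Cocomplete Q R c) : periodP Q c ≤ c.2.length := by
  apply Nat.sInf_le
  refine ⟨n_pos Q R c hcc, ?_⟩
  have := rot_mul_n Q R c 1 hcc
  rwa [Nat.mul_one] at this

lemma rot_mul_r (q : ℕ) (hcc : Cocomplete Q R c) :
    rotI Q (periodP Q c * q) c = c := by
  induction q with
  | zero => rfl
  | succ q ih =>
    rw [Nat.mul_succ, rot_add, (per_spec Q R c hcc).2, ih]

lemma rho_mod (a : ℕ) (hcc : Cocomplete Q R c) :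
    rotI Q a c = rotI Q (a % periodP Q c) c := by
  conv_lhs => rw [← Nat.mod_add_div a (periodP Q c)]
  rw [rot_add, rot_mul_r Q R c _ hcc]

lemma dvd_of_fix (hcc : Cocomplete Q R c) {a : ℕ} (ha : rotI Q a c = c) :
    periodP Q c ∣ a := by
  set r := periodP Q c with hr
  have h1 : rotI Q (a % r) c = c := by rw [← rho_mod Q R c a hcc]; exact ha
  by_contra hcon
  have hne : a % r ≠ 0 := fun h => hcon (Nat.dvd_of_mod_eq_zero h)
  have hmem : a % r ∈ {i : ℕ | 1 ≤ i ∧ rotI Q i c = c} := ⟨Nat.one_le_iff_ne_zero.mpr hne, h1⟩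
  have hle : r ≤ a % r := Nat.sInf_le hmem
  have hlt : a % r < r := Nat.mod_lt a (per_spec Q R c hcc).1
  omega

lemma r_dvd_n (hcc : Cocomplete Q R c) : periodP Q c ∣ c.2.length := by
  apply dvd_of_fix Q R c hcc
  have := rot_mul_n Q R c 1 hcc
  rwa [Nat.mul_one] at this

lemma fix_of_dvd (hcc : Cocomplete Q R c) {a : ℕ} (ha : periodP Q c ∣ a) :
    rotI Q a c = c := by
  obtain ⟨q, rfl⟩ := ha
  exact rot_mul_r Q R c q hcc

lemma rho_congr (hcc : Cocomplete Q R c) {a b : ℕ}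
    (h : a % periodP Q c = b % periodP Q c) : rotI Q a c = rotI Q b c := by
  rw [rho_mod Q R c a hcc, rho_mod Q R c b hcc, h]

lemma rho_inj (hcc : Cocomplete Q R c) {a b : ℕ} (ha : a < periodP Q c)
    (hb : b < periodP Q c) (h : rotI Q a c = rotI Q b c) : a = b := by
  set r := periodP Q c with hr
  set n := c.2.length with hn
  have hnpos : 0 < n := n_pos Q R c hcc
  -- wlog a ≤ b
  have main : ∀ a b : ℕ, a < r → b < r → a ≤ b → rotI Q a c = rotI Q b c → a = b := by
    intro a b ha hb hab h
    have hble : b ≤ n * b := Nat.le_mul_of_pos_left b hnpos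
    have h1 : rotI Q (n * b - b + b) c = c := by
      have he : n * b - b + b = n * b := by omega
      rw [he]; exact rot_mul_n Q R c b hcc
    have h2 : rotI Q (n * b - b + a) c = c := by
      calc rotI Q (n * b - b + a) c = rotI Q (n * b - b) (rotI Q a c) := rot_add Q _ _ c
        _ = rotI Q (n * b - b) (rotI Q b c) := by rw [h]
        _ = rotI Q (n * b - b + b) c := (rot_add Q _ _ c).symm
        _ = c := h1
    have hdvd : r ∣ n * b - b + a := dvd_of_fix Q R c hcc h2
    have hdvd2 : r ∣ n * b := Dvd.dvd.mul_right (r_dvd_n Q R c hcc) b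
    have hdvd3 : r ∣ b - a := by
      have e : n * b - (n * b - b + a) = b - a := by omega
      exact e ▸ Nat.dvd_sub hdvd2 hdvd
    rcases Nat.eq_zero_or_pos (b - a) with h0 | hpos
    · omega
    · have := Nat.le_of_dvd hpos hdvd3
      omega
  rcases le_total a b with hab | hab
  · exact main a b ha hb hab h
  · exact (main b a hb ha hab h.symm).symm

lemma rho_inj_iff (hcc : Cocomplete Q R c) {a b : ℕ} :
    rotI Q a c = rotI Q b c ↔ a % periodP Q c = b % periodP Q c := by
  constructor
  · intro h
    have hrpos : 0 < periodP Q c := (per_spec Q R c hcc).1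
    apply rho_inj Q R c hcc (Nat.mod_lt a hrpos) (Nat.mod_lt b hrpos)
    rw [← rho_mod Q R c a hcc, ← rho_mod Q R c b hcc]
    exact h
  · exact rho_congr Q R c hcc

lemma rho_period (a : ℕ) (hcc : Cocomplete Q R c) :
    rotI Q (a + periodP Q c) c = rotI Q a c := by
  rw [rot_add, (per_spec Q R c hcc).2]

lemma lc_rot_r (hcc : Cocomplete Q R c) : c.2.rotate (periodP Q c) = c.2 := by
  have h1 : c.2.rotate ((c.2.length - 1) * periodP Q c) = c.2 := by
    have := (per_spec Q R c hcc).2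
    rw [rho_eq Q R c _ hcc] at this
    have := congrArg Prod.snd this
    exact this
  have hnpos : 0 < c.2.length := n_pos Q R c hcc
  calc c.2.rotate (periodP Q c)
      = (c.2.rotate ((c.2.length - 1) * periodP Q c)).rotate (periodP Q c) := by rw [h1]
    _ = c.2.rotate ((c.2.length - 1) * periodP Q c + periodP Q c) := List.rotate_rotate _ _ _
    _ = c.2.rotate (c.2.length * periodP Q c) := by
        congr 1
        have e : (c.2.length - 1) * periodP Q c + periodP Q c
            = (c.2.length - 1 + 1) * periodP Q c := by ring
        rw [e]
        congr 1
        omega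
    _ = c.2 := rotate_mul_length _ _

lemma lc_rot_mul_r (q : ℕ) (hcc : Cocomplete Q R c) :
    c.2.rotate (periodP Q c * q) = c.2 := by
  induction q with
  | zero => simp
  | succ q ih =>
    rw [Nat.mul_succ, ← List.rotate_rotate, ih, lc_rot_r Q R c hcc]

lemma lc_rot_congr (hcc : Cocomplete Q R c) {a b : ℕ}
    (h : a % periodP Q c = b % periodP Q c) : c.2.rotate a = c.2.rotate b := by
  have key : ∀ x : ℕ, c.2.rotate x = c.2.rotate (x % periodP Q c) := by
    intro x
    conv_lhs => rw [← Nat.div_add_mod x (periodP Q c)]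
    rw [← List.rotate_rotate, lc_rot_mul_r Q R c _ hcc]
  rw [key a, key b, h]

lemma arith2 (n r j : ℕ) (hr : 1 ≤ r) (hn : 1 ≤ n) (hd : r ∣ n) :
    ((n - 1) * (j + r - 1)) % r = ((n - 1) * j + 1) % r := by
  rcases Nat.lt_or_ge r 2 with h1 | h2
  · interval_cases r
    simp [Nat.mod_one]
  · obtain ⟨s, rfl⟩ := hd
    have hs : 1 ≤ s := by
      rcases Nat.eq_zero_or_pos s with h | h
      · subst h; omega
      · exact h
    have e0 : j + r - 1 = j + (r - 1) := by omega
    rw [e0, Nat.mul_add]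
    have key : (r * s - 1) * (r - 1) = r * (r * s - s - 1) + 1 := by
      have hsn : s + 1 ≤ r * s := by nlinarith
      zify [show 1 ≤ r * s by omega, show 1 ≤ r by omega, show s ≤ r * s by nlinarith,
        show 1 ≤ r * s - s by omega]
      ring
    rw [key]
    rw [show (r * s - 1) * j + (r * (r * s - s - 1) + 1) = r * (r * s - s - 1) + ((r * s - 1) * j + 1) by ring]
    rw [Nat.mul_add_mod]

lemma r1P_cons (v : Q.V) (b : Q.A) (rest : List Q.A) :
    r1P Q (v, b :: rest) = (Q.tgt b, rest) := rfl

lemma r2P_cons (v : Q.V) (b : Q.A) (rest : List Q.A) :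
    r2P Q (v, b :: rest) = (Q.src b, [b]) := rfl

lemma d1raw_single (v1 v2 : Q.V) (l1 : List Q.A) (b : Q.A) :
    d1raw Q ((v1, l1), (v2, [b])) = ((Q.src b, b :: l1), (v2, [])) := rfl

lemma d2raw_cons (v1 v2 : Q.V) (l1 l2 : List Q.A) (b : Q.A) :
    d2raw Q ((v1, l1), (v2, b :: l2)) = ((v1, l1 ++ [b]), (Q.tgt b, l2)) := rfl

lemma cyc_rho (j : ℕ) (hcc : Cocomplete Q R c) : IsCycle Q (rotI Q j c) := by
  rw [rho_eq Q R c j hcc]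
  exact cyc_rot Q R c _ hcc

lemma inB_rho (j : ℕ) (hcc : Cocomplete Q R c) : InB Q R (rotI Q j c) := by
  rw [rho_eq Q R c j hcc]
  exact inB_rot Q R c _ hcc

lemma rho_ne_nil (j : ℕ) (hcc : Cocomplete Q R c) : (rotI Q j c).2 ≠ [] :=
  (cyc_rho Q R c j hcc).2.1

lemma memX (j : ℕ) (hcc : Cocomplete Q R c) :
    BGmem Q R 0 (rotI Q j c, ((rotI Q j c).1, [])) := by
  refine ⟨inB_rho Q R c j hcc, ⟨⟨List.isChain_nil, by simp⟩, List.isChain_nil⟩, rfl, ?_, ?_⟩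
  · show psrc Q _ = ptgt Q _
    simp [psrc, ptgt]
  · show ptgt Q _ = psrc Q _
    rw [← (cyc_rho Q R c j hcc).2.2]
    rfl

lemma memY (j : ℕ) (hcc : Cocomplete Q R c) :
    BGmem Q R 1 (r1P Q (rotI Q j c), r2P Q (rotI Q j c)) := by
  obtain ⟨b, rest, hb⟩ := List.exists_cons_of_ne_nil (rho_ne_nil Q R c j hcc)
  have hcyc : IsCycle Q (rotI Q j c) := cyc_rho Q R c j hcc
  have hok : Ok Q (rotI Q j c) := hcyc.1
  have hchain : ((rotI Q j c).2).Chain' (cmp Q) := hok.1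
  have hnR : ((rotI Q j c).2).Chain' (fun a b => (a,b) ∉ R) := (inB_rho Q R c j hcc).2
  have hsrc : Q.src b = (rotI Q j c).1 := hok.2 b (by rw [hb]; rfl)
  have hpe : rotI Q j c = ((rotI Q j c).1, b :: rest) := Prod.ext rfl hb
  have hr1 : r1P Q (rotI Q j c) = (Q.tgt b, rest) :=
    (congrArg (r1P Q) hpe).trans (r1P_cons Q _ b rest)
  have hr2 : r2P Q (rotI Q j c) = (Q.src b, [b]) :=
    (congrArg (r2P Q) hpe).trans (r2P_cons Q _ b rest)
  have hch : (b :: rest).Chain' (cmp Q) := hb ▸ hchain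
  have hchR : (b :: rest).Chain' (fun a b => (a,b) ∉ R) := hb ▸ hnR
  rw [hr1, hr2]
  have htgt1 : ptgt Q (Q.tgt b, rest) = Q.src b := by
    cases rest with
    | nil =>
      -- cycle of length one
      have h1 : psrc Q (rotI Q j c) = ptgt Q (rotI Q j c) := hcyc.2.2
      rw [hpe] at h1
      simp [psrc, ptgt] at h1
      simp [ptgt, ← hsrc, ← h1]
    | cons q qs =>
      have h1 : psrc Q (rotI Q j c) = ptgt Q (rotI Q j c) := hcyc.2.2
      rw [hpe] at h1
      simp only [psrc, ptgt] at h1 ⊢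
      rw [List.getLast?_cons_cons] at h1
      rw [List.getLast?_eq_getLast (l := q :: qs) (by simp)] at h1 ⊢
      simp only [Option.elim_some] at h1 ⊢
      rw [← hsrc] at h1
      exact h1.symm
  refine ⟨?_, ?_, rfl, ?_, ?_⟩
  · -- InB (Q.tgt b, rest)
    refine ⟨⟨?_, ?_⟩, ?_⟩
    · exact hch.tail
    · intro a ha
      have := (List.isChain_cons.mp hch).1 a ha
      exact this.symm
    · exact hchR.tail
  · -- InG (Q.src b, [b])
    exact ⟨⟨List.isChain_singleton b, by simp⟩, List.isChain_singleton b⟩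
  · -- psrc r1 = ptgt r2
    show Q.tgt b = ptgt Q (Q.src b, [b])
    simp [ptgt]
  · -- ptgt r1 = psrc r2
    exact htgt1

lemma concat_Yraw (j : ℕ) (hcc : Cocomplete Q R c) :
    concatP Q (r1P Q (rotI Q j c), r2P Q (rotI Q j c)) = rotI Q j c := by
  obtain ⟨b, rest, hb⟩ := List.exists_cons_of_ne_nil (rho_ne_nil Q R c j hcc)
  have hok : Ok Q (rotI Q j c) := (cyc_rho Q R c j hcc).1
  have hsrc : Q.src b = (rotI Q j c).1 := hok.2 b (by rw [hb]; rfl)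
  have hpe : rotI Q j c = ((rotI Q j c).1, b :: rest) := Prod.ext rfl hb
  have hr1 : r1P Q (rotI Q j c) = (Q.tgt b, rest) :=
    (congrArg (r1P Q) hpe).trans (r1P_cons Q _ b rest)
  have hr2 : r2P Q (rotI Q j c) = (Q.src b, [b]) :=
    (congrArg (r2P Q) hpe).trans (r2P_cons Q _ b rest)
  rw [hr1, hr2, concatP]
  dsimp only
  rw [hpe, ← hsrc]
  rfl

lemma d1raw_Yraw (j : ℕ) (hcc : Cocomplete Q R c) :
    d1raw Q (r1P Q (rotI Q j c), r2P Q (rotI Q j c))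
      = (rotI Q j c, ((rotI Q j c).1, [])) := by
  obtain ⟨b, rest, hb⟩ := List.exists_cons_of_ne_nil (rho_ne_nil Q R c j hcc)
  have hok : Ok Q (rotI Q j c) := (cyc_rho Q R c j hcc).1
  have hsrc : Q.src b = (rotI Q j c).1 := hok.2 b (by rw [hb]; rfl)
  have hpe : rotI Q j c = ((rotI Q j c).1, b :: rest) := Prod.ext rfl hb
  have hr1 : r1P Q (rotI Q j c) = (Q.tgt b, rest) :=
    (congrArg (r1P Q) hpe).trans (r1P_cons Q _ b rest)
  have hr2 : r2P Q (rotI Q j c) = (Q.src b, [b]) :=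
    (congrArg (r2P Q) hpe).trans (r2P_cons Q _ b rest)
  rw [hr1, hr2, d1raw_single, hsrc]
  rw [hpe]

lemma rho_succ_list (j : ℕ) (hcc : Cocomplete Q R c) {b : Q.A} {rest : List Q.A}
    (hb : (rotI Q j c).2 = b :: rest) :
    c.2.rotate ((c.2.length - 1) * (j + periodP Q c - 1)) = rest ++ [b] := by
  have hrot : c.2.rotate ((c.2.length - 1) * j) = b :: rest := by
    have := rho_eq Q R c j hcc
    rw [this] at hb
    exact hb
  have harith := arith2 c.2.length (periodP Q c) j (per_spec Q R c hcc).1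
    (n_pos Q R c hcc) (r_dvd_n Q R c hcc)
  calc c.2.rotate ((c.2.length - 1) * (j + periodP Q c - 1))
      = c.2.rotate ((c.2.length - 1) * j + 1) := lc_rot_congr Q R c hcc harith
    _ = (c.2.rotate ((c.2.length - 1) * j)).rotate 1 := (List.rotate_rotate _ _ _).symm
    _ = (b :: rest).rotate 1 := by rw [hrot]
    _ = rest ++ [b] := by
        have := List.rotate_cons_succ rest b 0
        simpa using this

lemma d2raw_Yraw (j : ℕ) (hcc : Cocomplete Q R c) :
    d2raw Q (r1P Q (rotI Q j c), r2P Q (rotI Q j c))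
      = (rotI Q (j + periodP Q c - 1) c, ((rotI Q (j + periodP Q c - 1) c).1, [])) := by
  obtain ⟨b, rest, hb⟩ := List.exists_cons_of_ne_nil (rho_ne_nil Q R c j hcc)
  have hcyc : IsCycle Q (rotI Q j c) := cyc_rho Q R c j hcc
  have hok : Ok Q (rotI Q j c) := hcyc.1
  have hsrc : Q.src b = (rotI Q j c).1 := hok.2 b (by rw [hb]; rfl)
  have hpe : rotI Q j c = ((rotI Q j c).1, b :: rest) := Prod.ext rfl hb
  have hch : (b :: rest).Chain' (cmp Q) := hb ▸ hok.1
  have hr1 : r1P Q (rotI Q j c) = (Q.tgt b, rest) :=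
    (congrArg (r1P Q) hpe).trans (r1P_cons Q _ b rest)
  have hr2 : r2P Q (rotI Q j c) = (Q.src b, [b]) :=
    (congrArg (r2P Q) hpe).trans (r2P_cons Q _ b rest)
  rw [hr1, hr2, d2raw_cons]
  -- identify rotI (j + r - 1) c
  have hlist := rho_succ_list Q R c j hcc hb
  have hrho : rotI Q (j + periodP Q c - 1) c
      = mkC Q (c.2.rotate ((c.2.length - 1) * (j + periodP Q c - 1)))
        (rot_ne Q R c _ hcc) := rho_eq Q R c _ hcc
  have hne : rest ++ [b] ≠ [] := by simp
  have hrho2 : rotI Q (j + periodP Q c - 1) c = mkC Q (rest ++ [b]) hne :=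
    hrho.trans (mkC_congr Q _ hne hlist)
  have hhead : Q.src ((rest ++ [b]).head hne) = Q.tgt b := by
    cases rest with
    | nil =>
      -- length-one cycle: tgt b = src b
      have h1 : psrc Q (rotI Q j c) = ptgt Q (rotI Q j c) := hcyc.2.2
      rw [hpe] at h1
      simp [psrc, ptgt] at h1
      simpa using (hsrc.trans h1)
    | cons q qs =>
      have := (List.isChain_cons_cons.mp hch).1
      simpa [cmp] using this.symm
  have hfst : (mkC Q (rest ++ [b]) hne).1 = Q.tgt b := hhead
  have : mkC Q (rest ++ [b]) hne = (Q.tgt b, rest ++ [b]) := Prod.ext hfst rfl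
  rw [hrho2, this]

lemma ptgt_irrel (v w : Q.V) (l : List Q.A) (hl : l ≠ []) :
    ptgt Q (v, l) = ptgt Q (w, l) := by
  simp [ptgt, List.getLast?_eq_getLast hl]

lemma rotI_nil {p : PathDat Q} (hp : p.2 = []) (i : ℕ) : rotI Q i p = p := by
  induction i with
  | zero => rfl
  | succ i ih =>
    rw [rotI, Function.iterate_succ_apply', ← rotI, ih]
    rw [rotP]
    have : p.2.getLast? = none := by rw [hp]; rfl
    rw [this]

lemma concat_ne {x : PathDat Q × PathDat Q} (hcc : Cocomplete Q R c)
    (hre : RotEquiv Q (concatP Q x) c) : x.2.2 ++ x.1.2 ≠ [] := by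
  intro hnil
  obtain ⟨i, hi⟩ := hre
  have : (concatP Q x).2 = [] := hnil
  rw [rotI_nil Q this i] at hi
  have h2 := congrArg Prod.snd hi
  exact c_ne Q R c hcc (by rw [← h2]; exact hnil)

lemma concat_cycle {m : ℕ} {x : PathDat Q × PathDat Q} (hx : BGmem Q R m x)
    (hne : x.2.2 ++ x.1.2 ≠ []) : IsCycle Q (concatP Q x) := by
  obtain ⟨hB, hG, hlen, hA1, hA2⟩ := hx
  refine ⟨⟨?_, ?_⟩, hne, ?_⟩
  · -- chain
    unfold List.Chain'
    rw [show (concatP Q x).2 = x.2.2 ++ x.1.2 from rfl, List.isChain_append]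
    refine ⟨hG.1.1, hB.1.1, ?_⟩
    intro a ha y hy
    have h1 : Q.src y = x.1.1 := hB.1.2 y hy
    have h2 : ptgt Q x.2 = Q.tgt a := by simp [ptgt, Option.mem_def.mp ha]
    rw [h1, show x.1.1 = psrc Q x.1 from rfl, hA1, h2]
  · -- head condition
    intro a ha
    show Q.src a = x.2.1
    by_cases hg : x.2.2 = []
    · rw [show (concatP Q x).2 = x.2.2 ++ x.1.2 from rfl, hg, List.nil_append] at ha
      have h1 : Q.src a = x.1.1 := hB.1.2 a ha
      have h2 : ptgt Q x.2 = x.2.1 := by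
        have : x.2 = (x.2.1, ([] : List Q.A)) := Prod.ext rfl hg
        rw [this]; rfl
      rw [h1, show x.1.1 = psrc Q x.1 from rfl, hA1, h2]
    · obtain ⟨g, gs, hgs⟩ := List.exists_cons_of_ne_nil hg
      rw [show (concatP Q x).2 = x.2.2 ++ x.1.2 from rfl, hgs] at ha
      simp only [List.cons_append, List.head?_cons, Option.mem_def, Option.some.injEq] at ha
      have hsg : Q.src g = x.2.1 := hG.1.2 g (by rw [hgs]; rfl)
      rw [← ha]
      exact hsg
  · -- psrc = ptgt
    show x.2.1 = ptgt Q (concatP Q x)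
    by_cases ha : x.1.2 = []
    · have hcl : (concatP Q x).2 = x.2.2 := by
        show x.2.2 ++ x.1.2 = x.2.2
        rw [ha, List.append_nil]
      have e1 : ptgt Q (concatP Q x) = ptgt Q x.2 := by
        have : concatP Q x = (x.2.1, x.2.2) := Prod.ext rfl hcl
        rw [this]
      have e2 : ptgt Q x.1 = x.1.1 := by
        have : x.1 = (x.1.1, ([] : List Q.A)) := Prod.ext rfl ha
        rw [this]; rfl
      have e3 : ptgt Q x.2 = psrc Q x.1 := hA1.symm
      have e4 : x.1.1 = psrc Q x.2 := by rw [← e2, hA2]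
      rw [e1, e3, show psrc Q x.1 = x.1.1 from rfl, e4]; rfl
    · have hg1 : ptgt Q (concatP Q x) = ptgt Q x.1 := by
        show ptgt Q (x.2.1, x.2.2 ++ x.1.2) = ptgt Q x.1
        have h1 : ptgt Q (x.2.1, x.2.2 ++ x.1.2) = ptgt Q (x.1.1, x.2.2 ++ x.1.2) :=
          ptgt_irrel Q _ _ _ (by simp [ha])
        rw [h1]
        have h2 : (x.2.2 ++ x.1.2).getLast? = x.1.2.getLast? :=
          List.getLast?_append_of_ne_nil _ ha
        show (x.2.2 ++ x.1.2).getLast?.elim x.1.1 Q.tgt = ptgt Q x.1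
        rw [h2]; rfl
      rw [hg1, hA2]; rfl

lemma classify0 (hcc : Cocomplete Q R c) {x : PathDat Q × PathDat Q}
    (hx : BGmem Q R 0 x) (hre : RotEquiv Q (concatP Q x) c) :
    ∃ j, x = (rotI Q j c, ((rotI Q j c).1, [])) := by
  have hg : x.2.2 = [] := List.length_eq_zero_iff.mp hx.2.2.1
  have hc1 : concatP Q x = x.1 := by
    have h1 : (concatP Q x).2 = x.1.2 := by
      show x.2.2 ++ x.1.2 = x.1.2
      rw [hg]; rfl
    have h2 : (concatP Q x).1 = x.1.1 := by
      show x.2.1 = x.1.1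
      have e : ptgt Q x.2 = x.2.1 := by
        have : x.2 = (x.2.1, ([] : List Q.A)) := Prod.ext rfl hg
        rw [this]; rfl
      rw [← e, ← hx.2.2.2.1]; rfl
    exact Prod.ext h2 h1
  have hcyc : IsCycle Q (concatP Q x) :=
    concat_cycle Q R hx (concat_ne Q R c hcc hre)
  obtain ⟨j, hj⟩ := classRho Q R c hcc hcyc hre
  rw [hc1] at hj
  refine ⟨j, Prod.ext (by rw [← hj]) ?_⟩
  show x.2 = ((rotI Q j c).1, [])
  refine Prod.ext ?_ hg
  show x.2.1 = (rotI Q j c).1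
  rw [← hj]
  show x.2.1 = x.1.1
  have e : ptgt Q x.2 = x.2.1 := by
    have : x.2 = (x.2.1, ([] : List Q.A)) := Prod.ext rfl hg
    rw [this]; rfl
  rw [← e, ← hx.2.2.2.1]; rfl

lemma classify1 (hcc : Cocomplete Q R c) {x : PathDat Q × PathDat Q}
    (hx : BGmem Q R 1 x) (hre : RotEquiv Q (concatP Q x) c) :
    ∃ j, x = (r1P Q (rotI Q j c), r2P Q (rotI Q j c)) := by
  obtain ⟨b, hb⟩ := List.length_eq_one_iff.mp hx.2.2.1
  have hcyc : IsCycle Q (concatP Q x) :=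
    concat_cycle Q R hx (concat_ne Q R c hcc hre)
  obtain ⟨j, hj⟩ := classRho Q R c hcc hcyc hre
  have hcform : concatP Q x = (x.2.1, b :: x.1.2) := by
    show (x.2.1, x.2.2 ++ x.1.2) = (x.2.1, b :: x.1.2)
    rw [hb]; rfl
  have hsb : Q.src b = x.2.1 := hx.2.1.1.2 b (by rw [hb]; rfl)
  have htb : ptgt Q x.2 = Q.tgt b := by
    have : x.2 = (x.2.1, [b]) := Prod.ext rfl hb
    rw [this]
    simp [ptgt]
  refine ⟨j, Prod.ext ?_ ?_⟩
  · show x.1 = r1P Q (rotI Q j c)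
    rw [← hj, hcform, r1P_cons]
    exact Prod.ext ((show x.1.1 = ptgt Q x.2 from hx.2.2.2.1).trans htb) rfl
  · show x.2 = r2P Q (rotI Q j c)
    rw [← hj, hcform, r2P_cons]
    exact Prod.ext hsb.symm hb

lemma classifyG (hcc : Cocomplete Q R c) {m : ℕ} (hm : 2 ≤ m)
    {x : PathDat Q × PathDat Q} (hx : BGmem Q R m x)
    (hre : RotEquiv Q (concatP Q x) c) : False := by
  have hcyc : IsCycle Q (concatP Q x) :=
    concat_cycle Q R hx (concat_ne Q R c hcc hre)
  obtain ⟨j, hj⟩ := classRho Q R c hcc hcyc hre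
  -- the concatenated list is a rotation of c, hence has no relations inside
  have hlist : x.2.2 ++ x.1.2 = c.2.rotate ((c.2.length - 1) * j) := by
    have h1 : (concatP Q x).2 = x.2.2 ++ x.1.2 := rfl
    rw [← h1, hj, rho_eq Q R c j hcc]; rfl
  have hnR : (x.2.2 ++ x.1.2).Chain' (fun a b => (a, b) ∉ R) := by
    rw [hlist]
    exact chain_nR_rot Q R c _ hcc
  have hnRg : x.2.2.Chain' (fun a b => (a, b) ∉ R) := (List.isChain_append.mp hnR).1
  -- but the Γ-part has length ≥ 2 and all pairs in R
  obtain ⟨a, b, t, hab⟩ : ∃ a b t, x.2.2 = a :: b :: t := by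
    have hlen2 : x.2.2.length = m := hx.2.2.1
    have h1 : x.2.2 ≠ [] := by
      intro h; rw [h] at hlen2; simp at hlen2; omega
    obtain ⟨a, l, hal⟩ := List.exists_cons_of_ne_nil h1
    have h2 : l ≠ [] := by
      intro h; rw [hal, h] at hlen2; simp at hlen2; omega
    obtain ⟨b, t, hbt⟩ := List.exists_cons_of_ne_nil h2
    exact ⟨a, b, t, by rw [hal, hbt]⟩
  have hinR : (a, b) ∈ R := by
    have := hx.2.1.2
    rw [hab] at this
    exact (List.isChain_cons_cons.mp this).1
  have hninR : (a, b) ∉ R := by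
    rw [hab] at hnRg
    exact (List.isChain_cons_cons.mp hnRg).1
  exact hninR hinR

section Lin

variable (k : Type) [Field k]

/-- degree-0 basis element attached to `rot^a c`. -/
noncomputable def xE (hcc : Cocomplete Q R c) (a : ℕ) : BGt Q R 0 :=
  ⟨(rotI Q a c, ((rotI Q a c).1, [])), memX Q R c a hcc⟩

/-- degree-1 basis element attached to `rot^a c`. -/
noncomputable def yU (hcc : Cocomplete Q R c) (a : ℕ) : BGt Q R 1 :=
  ⟨(r1P Q (rotI Q a c), r2P Q (rotI Q a c)), memY Q R c a hcc⟩

noncomputable def Ee (a : ℕ) : Chn k Q R 0 :=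
  bw k Q R 0 (rotI Q a c, ((rotI Q a c).1, []))

noncomputable def Uu (a : ℕ) : Chn k Q R 1 :=
  bw k Q R 1 (r1P Q (rotI Q a c), r2P Q (rotI Q a c))

lemma bw_pos {m : ℕ} {x : PathDat Q × PathDat Q} (h : BGmem Q R m x) :
    bw k Q R m x = Finsupp.single (⟨x, h⟩ : BGt Q R m) 1 := by
  unfold bw
  rw [dif_pos h]

lemma Ee_eq (hcc : Cocomplete Q R c) (a : ℕ) :
    Ee Q R c k a = Finsupp.single (xE Q R c hcc a) 1 :=
  bw_pos Q R k (memX Q R c a hcc)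

lemma Uu_eq (hcc : Cocomplete Q R c) (a : ℕ) :
    Uu Q R c k a = Finsupp.single (yU Q R c hcc a) 1 :=
  bw_pos Q R k (memY Q R c a hcc)

lemma Ee_congr (hcc : Cocomplete Q R c) {a b : ℕ}
    (h : a % periodP Q c = b % periodP Q c) : Ee Q R c k a = Ee Q R c k b := by
  unfold Ee
  rw [rho_congr Q R c hcc h]

lemma Uu_congr (hcc : Cocomplete Q R c) {a b : ℕ}
    (h : a % periodP Q c = b % periodP Q c) : Uu Q R c k a = Uu Q R c k b := by
  unfold Uu
  rw [rho_congr Q R c hcc h]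

lemma xE_inj (hcc : Cocomplete Q R c) {a b : ℕ} :
    xE Q R c hcc a = xE Q R c hcc b ↔ a % periodP Q c = b % periodP Q c := by
  constructor
  · intro h
    have h2 : rotI Q a c = rotI Q b c :=
      congrArg (fun z => z.val.1) h
    exact (rho_inj_iff Q R c hcc).mp h2
  · intro h
    have h2 : rotI Q a c = rotI Q b c := rho_congr Q R c hcc h
    apply Subtype.ext
    show (rotI Q a c, ((rotI Q a c).1, ([] : List Q.A))) = _
    rw [h2]
    rfl

lemma yU_inj (hcc : Cocomplete Q R c) {a b : ℕ} :
    yU Q R c hcc a = yU Q R c hcc b ↔ a % periodP Q c = b % periodP Q c := by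
  constructor
  · intro h
    have h2 : concatP Q (r1P Q (rotI Q a c), r2P Q (rotI Q a c))
        = concatP Q (r1P Q (rotI Q b c), r2P Q (rotI Q b c)) := by
      have := congrArg (fun z => concatP Q z.val) h
      exact this
    rw [concat_Yraw Q R c a hcc, concat_Yraw Q R c b hcc] at h2
    exact (rho_inj_iff Q R c hcc).mp h2
  · intro h
    have h2 : rotI Q a c = rotI Q b c := rho_congr Q R c hcc h
    apply Subtype.ext
    show (r1P Q (rotI Q a c), r2P Q (rotI Q a c)) = _
    rw [h2]
    rfl

lemma Ee_apply (hcc : Cocomplete Q R c) (a j : ℕ) :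
    (Ee Q R c k a) (xE Q R c hcc j) =
      if a % periodP Q c = j % periodP Q c then (1 : k) else 0 := by
  rw [Ee_eq Q R c k hcc a, Finsupp.single_apply]
  exact if_congr (xE_inj Q R c hcc) rfl rfl

lemma Uu_apply (hcc : Cocomplete Q R c) (a j : ℕ) :
    (Uu Q R c k a) (yU Q R c hcc j) =
      if a % periodP Q c = j % periodP Q c then (1 : k) else 0 := by
  rw [Uu_eq Q R c k hcc a, Finsupp.single_apply]
  exact if_congr (yU_inj Q R c hcc) rfl rfl

lemma bd_single {m : ℕ} (x : BGt Q R (m + 1)) :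
    bd k Q R m (Finsupp.single x 1) = bdB k Q R m x := by
  unfold bd
  rw [Finsupp.linearCombination_single, one_smul]

lemma bd_Uu (hcc : Cocomplete Q R c) (a : ℕ) :
    bd k Q R 0 (Uu Q R c k a) = Ee Q R c k a - Ee Q R c k (a + periodP Q c - 1) := by
  rw [Uu_eq Q R c k hcc a, bd_single]
  unfold bdB
  show bw k Q R 0 (d1raw Q (r1P Q (rotI Q a c), r2P Q (rotI Q a c)))
      + (-1 : k) ^ (0 + 1) • bw k Q R 0 (d2raw Q (r1P Q (rotI Q a c), r2P Q (rotI Q a c))) = _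
  rw [d1raw_Yraw Q R c a hcc, d2raw_Yraw Q R c a hcc]
  show Ee Q R c k a + (-1 : k) ^ (0 + 1) • Ee Q R c k (a + periodP Q c - 1) = _
  rw [pow_one, neg_smul, one_smul, ← sub_eq_add_neg]

lemma rotEquiv_rho (a : ℕ) (hcc : Cocomplete Q R c) : RotEquiv Q (rotI Q a c) c := by
  refine ⟨c.2.length * a - a, ?_⟩
  have ha : a ≤ c.2.length * a := Nat.le_mul_of_pos_left a (n_pos Q R c hcc)
  rw [← rot_add Q _ _ c, show c.2.length * a - a + a = c.2.length * a by omega]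
  exact rot_mul_n Q R c a hcc

lemma concat_Xraw (a : ℕ) :
    concatP Q (rotI Q a c, ((rotI Q a c).1, [])) = rotI Q a c := by
  show ((rotI Q a c).1, [] ++ (rotI Q a c).2) = rotI Q a c
  rw [List.nil_append]

lemma Ee_mem_Wsp (hcc : Cocomplete Q R c) (a : ℕ) :
    Ee Q R c k a ∈ Wsp k Q R c 0 := by
  rw [Ee_eq Q R c k hcc a]
  apply Submodule.subset_span
  refine ⟨xE Q R c hcc a, ?_, rfl⟩
  show RotEquiv Q (concatP Q (rotI Q a c, ((rotI Q a c).1, []))) c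
  rw [concat_Xraw]
  exact rotEquiv_rho Q R c a hcc

lemma Uu_mem_Wsp (hcc : Cocomplete Q R c) (a : ℕ) :
    Uu Q R c k a ∈ Wsp k Q R c 1 := by
  rw [Uu_eq Q R c k hcc a]
  apply Submodule.subset_span
  refine ⟨yU Q R c hcc a, ?_, rfl⟩
  show RotEquiv Q (concatP Q (r1P Q (rotI Q a c), r2P Q (rotI Q a c))) c
  rw [concat_Yraw Q R c a hcc]
  exact rotEquiv_rho Q R c a hcc

lemma Wsp_bot (hcc : Cocomplete Q R c) {m : ℕ} (hm : 2 ≤ m) :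
    Wsp k Q R c m = ⊥ := by
  rw [Wsp, Submodule.span_eq_bot]
  rintro z ⟨x, hre, rfl⟩
  exact absurd hre (fun h => classifyG Q R c hcc hm x.2 h)

lemma WB1_bot (hcc : Cocomplete Q R c) : WB k Q R c 1 = ⊥ := by
  rw [WB, Wsp_bot Q R c k hcc (le_refl 2), Submodule.map_bot]

lemma Ee_sub_mem_WB (hcc : Cocomplete Q R c) (a b : ℕ) :
    Ee Q R c k a - Ee Q R c k b ∈ WB k Q R c 0 := by
  have hr1 : 1 ≤ periodP Q c := (per_spec Q R c hcc).1
  have step : ∀ j : ℕ, Ee Q R c k (j + 1) - Ee Q R c k j ∈ WB k Q R c 0 := by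
    intro j
    have h1 : bd k Q R 0 (Uu Q R c k (j + 1))
        = Ee Q R c k (j + 1) - Ee Q R c k j := by
      rw [bd_Uu Q R c k hcc (j + 1)]
      congr 1
      apply Ee_congr Q R c k hcc
      rw [show j + 1 + periodP Q c - 1 = j + periodP Q c by omega, Nat.add_mod_right]
    exact ⟨Uu Q R c k (j + 1), Uu_mem_Wsp Q R c k hcc (j + 1), h1⟩
  have base : ∀ j : ℕ, Ee Q R c k j - Ee Q R c k 0 ∈ WB k Q R c 0 := by
    intro j
    induction j with
    | zero => simp
    | succ j ih =>
      have := Submodule.add_mem _ (step j) ih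
      simpa using this
  have := Submodule.sub_mem _ (base a) (base b)
  simpa using this

noncomputable def phi : Chn k Q R 0 →ₗ[k] k :=
  Finsupp.linearCombination k (fun _ => (1 : k))

lemma phi_single (x : BGt Q R 0) (t : k) :
    phi Q R k (Finsupp.single x t) = t := by
  unfold phi
  rw [Finsupp.linearCombination_single, smul_eq_mul, mul_one]

lemma gen0_eq (hcc : Cocomplete Q R c) {x : BGt Q R 0}
    (hre : RotEquiv Q (concatP Q x.val) c) : ∃ j, x = xE Q R c hcc j := by
  obtain ⟨j, hj⟩ := classify0 Q R c hcc x.2 hre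
  exact ⟨j, Subtype.ext hj⟩

lemma gen1_eq (hcc : Cocomplete Q R c) {x : BGt Q R 1}
    (hre : RotEquiv Q (concatP Q x.val) c) : ∃ j, x = yU Q R c hcc j := by
  obtain ⟨j, hj⟩ := classify1 Q R c hcc x.2 hre
  exact ⟨j, Subtype.ext hj⟩

lemma phi_WB0 (hcc : Cocomplete Q R c) :
    ∀ w ∈ WB k Q R c 0, phi Q R k w = 0 := by
  rintro w ⟨v, hv, rfl⟩
  have hker : Wsp k Q R c 1 ≤ LinearMap.ker ((phi Q R k).comp (bd k Q R 0)) := by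
    rw [Wsp]
    apply Submodule.span_le.mpr
    rintro z ⟨x, hre, rfl⟩
    obtain ⟨j, rfl⟩ := gen1_eq Q R c hcc hre
    show phi Q R k (bd k Q R 0 (Finsupp.single (yU Q R c hcc j) 1)) = 0
    rw [← Uu_eq Q R c k hcc j, bd_Uu Q R c k hcc j, map_sub,
      Ee_eq Q R c k hcc, Ee_eq Q R c k hcc, phi_single, phi_single, sub_self]
  have := hker hv
  simpa using this

lemma Ee0_notin_WB (hcc : Cocomplete Q R c) : Ee Q R c k 0 ∉ WB k Q R c 0 := by
  intro h
  have := phi_WB0 Q R c k hcc _ h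
  rw [Ee_eq Q R c k hcc, phi_single] at this
  exact one_ne_zero this

lemma span0 (hcc : Cocomplete Q R c) :
    ∀ z ∈ Wsp k Q R c 0, ∃ t : k, z - t • Ee Q R c k 0 ∈ WB k Q R c 0 := by
  intro z hz
  induction hz using Submodule.span_induction with
  | mem z hzm =>
    obtain ⟨x, hre, rfl⟩ := hzm
    obtain ⟨j, rfl⟩ := gen0_eq Q R c hcc hre
    refine ⟨1, ?_⟩
    rw [one_smul, ← Ee_eq Q R c k hcc]
    exact Ee_sub_mem_WB Q R c k hcc j 0
  | zero => exact ⟨0, by simp⟩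
  | add x y _ _ hx hy =>
    obtain ⟨t1, h1⟩ := hx
    obtain ⟨t2, h2⟩ := hy
    refine ⟨t1 + t2, ?_⟩
    have e : x + y - (t1 + t2) • Ee Q R c k 0
        = (x - t1 • Ee Q R c k 0) + (y - t2 • Ee Q R c k 0) := by
      rw [add_smul]; abel
    rw [e]
    exact Submodule.add_mem _ h1 h2
  | smul a x _ hx =>
    obtain ⟨t, h⟩ := hx
    refine ⟨a * t, ?_⟩
    have e : a • x - (a * t) • Ee Q R c k 0 = a • (x - t • Ee Q R c k 0) := by
      rw [mul_smul, smul_sub]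
    rw [e]
    exact Submodule.smul_mem _ a h

lemma sum_shift {M : Type} [AddCommGroup M] (r : ℕ) (g : ℕ → M)
    (hg : ∀ a, g (a + r) = g a) (s : ℕ) :
    ∑ i ∈ Finset.range r, g (i + s) = ∑ i ∈ Finset.range r, g i := by
  have h1 : ∀ h : ℕ → M, (∀ a, h (a + r) = h a) →
      ∑ i ∈ Finset.range r, h (i + 1) = ∑ i ∈ Finset.range r, h i := by
    intro h hh
    have e1 := Finset.sum_range_succ h r
    have e2 := Finset.sum_range_succ' h r
    have e3 : h r = h 0 := by
      have := hh 0
      simpa using this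
    have e4 := e1.symm.trans e2
    rw [e3] at e4
    exact add_right_cancel e4.symm
  induction s with
  | zero => simp
  | succ s ih =>
    calc ∑ i ∈ Finset.range r, g (i + (s + 1))
        = ∑ i ∈ Finset.range r, (fun t => g (t + s)) (i + 1) := by
          apply Finset.sum_congr rfl
          intro i _
          show g (i + (s + 1)) = g (i + 1 + s)
          congr 1
          omega
      _ = ∑ i ∈ Finset.range r, g (i + s) := by
          exact h1 (fun t => g (t + s)) (fun a => by
            show g (a + r + s) = g (a + s)
            rw [show a + r + s = (a + s) + r by omega, hg])
      _ = ∑ i ∈ Finset.range r, g i := ih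

lemma Ee_period (hcc : Cocomplete Q R c) (a : ℕ) :
    Ee Q R c k (a + periodP Q c) = Ee Q R c k a :=
  Ee_congr Q R c k hcc (Nat.add_mod_right a _)

lemma Uu_period (hcc : Cocomplete Q R c) (a : ℕ) :
    Uu Q R c k (a + periodP Q c) = Uu Q R c k a :=
  Uu_congr Q R c k hcc (Nat.add_mod_right a _)

lemma hCycR_form : hCycR k Q R 1 c = ∑ i ∈ Finset.range (periodP Q c), Uu Q R c k i := rfl

lemma bd_hCycR (hcc : Cocomplete Q R c) : bd k Q R 0 (hCycR k Q R 1 c) = 0 := by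
  have hr1 : 1 ≤ periodP Q c := (per_spec Q R c hcc).1
  rw [hCycR_form, map_sum]
  have e1 : ∀ i ∈ Finset.range (periodP Q c),
      bd k Q R 0 (Uu Q R c k i) = Ee Q R c k i - Ee Q R c k (i + (periodP Q c - 1)) := by
    intro i _
    rw [bd_Uu Q R c k hcc i]
    congr 2
    omega
  rw [Finset.sum_congr rfl e1, Finset.sum_sub_distrib,
    sum_shift _ _ (Ee_period Q R c k hcc) (periodP Q c - 1), sub_self]

lemma hCycR_mem_Wsp (hcc : Cocomplete Q R c) : hCycR k Q R 1 c ∈ Wsp k Q R c 1 := by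
  rw [hCycR_form]
  exact Submodule.sum_mem _ (fun i _ => Uu_mem_Wsp Q R c k hcc i)

lemma hCycR_ne_zero (hcc : Cocomplete Q R c) : hCycR k Q R 1 c ≠ 0 := by
  have hr1 : 1 ≤ periodP Q c := (per_spec Q R c hcc).1
  intro h0
  have happ := congrArg (fun z : Chn k Q R 1 => z (yU Q R c hcc 0)) h0
  simp only [Finsupp.coe_zero, Pi.zero_apply] at happ
  rw [hCycR_form, Finsupp.finset_sum_apply] at happ
  have e1 : ∀ i ∈ Finset.range (periodP Q c),
      (Uu Q R c k i) (yU Q R c hcc 0) = if i = 0 then (1 : k) else 0 := by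
    intro i hi
    rw [Uu_apply Q R c k hcc i 0]
    have hilt : i < periodP Q c := Finset.mem_range.mp hi
    rw [Nat.mod_eq_of_lt hilt, Nat.zero_mod]
  have hsum : ∑ i ∈ Finset.range (periodP Q c),
      (Uu Q R c k i) (yU Q R c hcc 0) = 1 := by
    rw [Finset.sum_congr rfl e1]
    rw [Finset.sum_ite_eq' (Finset.range (periodP Q c)) 0 (fun _ => (1 : k))]
    rw [if_pos (Finset.mem_range.mpr hr1)]
  rw [hsum] at happ
  exact one_ne_zero happ

lemma idx_mod (r i j : ℕ) (hr : 0 < r) (hi : i < r) (hj : j < r) :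
    ((i + r - 1) % r = j % r) ↔ i = (j + 1) % r := by
  have hj' : j % r = j := Nat.mod_eq_of_lt hj
  rcases Nat.eq_zero_or_pos i with h0 | hp
  · subst h0
    have e : (0 + r - 1) % r = r - 1 := by
      rw [Nat.zero_add]
      exact Nat.mod_eq_of_lt (by omega)
    rw [e, hj']
    constructor
    · intro h
      rw [← h, show r - 1 + 1 = r by omega, Nat.mod_self]
    · intro h
      rcases Nat.lt_or_ge (j + 1) r with hlt | hge
      · rw [Nat.mod_eq_of_lt hlt] at h
        omega
      · omega
  · have e : (i + r - 1) % r = i - 1 := by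
      rw [show i + r - 1 = (i - 1) + r by omega, Nat.add_mod_right]
      exact Nat.mod_eq_of_lt (by omega)
    rw [e, hj']
    constructor
    · intro h
      rw [show j + 1 = i by omega]
      exact (Nat.mod_eq_of_lt hi).symm
    · intro h
      rcases Nat.lt_or_ge (j + 1) r with hlt | hge
      · rw [Nat.mod_eq_of_lt hlt] at h
        omega
      · have hjr : j + 1 = r := by omega
        rw [hjr, Nat.mod_self] at h
        omega

lemma span1 (hcc : Cocomplete Q R c) :
    ∀ z ∈ Wsp k Q R c 1,
      z = ∑ i ∈ Finset.range (periodP Q c), (z (yU Q R c hcc i)) • Uu Q R c k i := by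
  have hrpos : 0 < periodP Q c := (per_spec Q R c hcc).1
  intro z hz
  induction hz using Submodule.span_induction with
  | mem z hzm =>
    obtain ⟨x, hre, rfl⟩ := hzm
    obtain ⟨j', rfl⟩ := gen1_eq Q R c hcc hre
    have hjr : (j' % periodP Q c) % periodP Q c = j' % periodP Q c :=
      Nat.mod_mod_of_dvd j' dvd_rfl
    have hyu : yU Q R c hcc j' = yU Q R c hcc (j' % periodP Q c) :=
      (yU_inj Q R c hcc).mpr hjr.symm
    set j := j' % periodP Q c with hjdef
    have hjlt : j < periodP Q c := Nat.mod_lt j' hrpos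
    rw [hyu, ← Uu_eq Q R c k hcc j]
    have e1 : ∀ i ∈ Finset.range (periodP Q c),
        (Uu Q R c k j) (yU Q R c hcc i) • Uu Q R c k i
          = if i = j then Uu Q R c k i else 0 := by
      intro i hi
      have hilt : i < periodP Q c := Finset.mem_range.mp hi
      rw [Uu_apply Q R c k hcc j i]
      rw [Nat.mod_eq_of_lt hilt, Nat.mod_eq_of_lt hjlt]
      rw [if_congr (⟨Eq.symm, Eq.symm⟩ : j = i ↔ i = j) rfl rfl]
      rw [ite_smul, one_smul, zero_smul]
    rw [Finset.sum_congr rfl e1,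
      Finset.sum_ite_eq' (Finset.range (periodP Q c)) j (fun i => Uu Q R c k i),
      if_pos (Finset.mem_range.mpr hjlt)]
  | zero => simp
  | add x y _ _ hx hy =>
    conv_lhs => rw [hx, hy]
    rw [← Finset.sum_add_distrib]
    apply Finset.sum_congr rfl
    intro i _
    rw [Finsupp.add_apply, add_smul]
  | smul a x _ hx =>
    conv_lhs => rw [hx]
    rw [Finset.smul_sum]
    apply Finset.sum_congr rfl
    intro i _
    rw [Finsupp.smul_apply, smul_eq_mul, mul_smul]

lemma t_rel (hcc : Cocomplete Q R c) (t : ℕ → k)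
    (hbd : bd k Q R 0 (∑ i ∈ Finset.range (periodP Q c), t i • Uu Q R c k i) = 0) :
    ∀ j < periodP Q c, t j = t ((j + 1) % periodP Q c) := by
  have hrpos : 0 < periodP Q c := (per_spec Q R c hcc).1
  intro j hj
  have happ := congrArg (fun z : Chn k Q R 0 => z (xE Q R c hcc j)) hbd
  simp only [Finsupp.coe_zero, Pi.zero_apply] at happ
  rw [map_sum] at happ
  have e0 : ∀ i ∈ Finset.range (periodP Q c),
      bd k Q R 0 (t i • Uu Q R c k i)
        = t i • (Ee Q R c k i - Ee Q R c k (i + periodP Q c - 1)) := by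
    intro i _
    rw [map_smul, bd_Uu Q R c k hcc i]
  rw [Finset.sum_congr rfl e0, Finsupp.finset_sum_apply] at happ
  have e1 : ∀ i ∈ Finset.range (periodP Q c),
      (t i • (Ee Q R c k i - Ee Q R c k (i + periodP Q c - 1))) (xE Q R c hcc j)
        = (if i = j then t i else 0) - (if i = (j + 1) % periodP Q c then t i else 0) := by
    intro i hi
    have hilt : i < periodP Q c := Finset.mem_range.mp hi
    rw [Finsupp.smul_apply, Finsupp.sub_apply, Ee_apply Q R c k hcc i j,
      Ee_apply Q R c k hcc _ j]
    rw [if_congr (show i % periodP Q c = j % periodP Q c ↔ i = j by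
        rw [Nat.mod_eq_of_lt hilt, Nat.mod_eq_of_lt hj]) rfl rfl]
    rw [if_congr (idx_mod (periodP Q c) i j hrpos hilt hj) rfl rfl]
    rw [smul_sub, smul_eq_mul, smul_eq_mul, mul_ite, mul_one, mul_zero,
      mul_ite, mul_one, mul_zero]
  rw [Finset.sum_congr rfl e1, Finset.sum_sub_distrib] at happ
  rw [Finset.sum_ite_eq' (Finset.range (periodP Q c)) j (fun i => t i),
    Finset.sum_ite_eq' (Finset.range (periodP Q c)) ((j + 1) % periodP Q c) (fun i => t i),
    if_pos (Finset.mem_range.mpr hj),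
    if_pos (Finset.mem_range.mpr (Nat.mod_lt _ hrpos))] at happ
  exact sub_eq_zero.mp happ

lemma t_const (hcc : Cocomplete Q R c) (t : ℕ → k)
    (hrel : ∀ j < periodP Q c, t j = t ((j + 1) % periodP Q c)) :
    ∀ j < periodP Q c, t j = t 0 := by
  intro j
  induction j with
  | zero => intro _; rfl
  | succ j ih =>
    intro h
    have h1 := ih (by omega)
    have h2 := hrel j (by omega)
    rw [Nat.mod_eq_of_lt h] at h2
    rw [← h2, h1]

lemma span1_final (hcc : Cocomplete Q R c) :
    ∀ z ∈ WZ k Q R c 1, ∃ t : k, z - t • hCycR k Q R 1 c ∈ WB k Q R c 1 := by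
  intro z hz
  have hzW : z ∈ Wsp k Q R c 1 := (Submodule.mem_inf.mp hz).2
  have hzZ : bd k Q R 0 z = 0 := by
    have h1 : z ∈ ZSp k Q R 1 := (Submodule.mem_inf.mp hz).1
    exact LinearMap.mem_ker.mp h1
  have hspan := span1 Q R c k hcc z hzW
  set t : ℕ → k := fun i => z (yU Q R c hcc i) with ht
  have hbd : bd k Q R 0 (∑ i ∈ Finset.range (periodP Q c), t i • Uu Q R c k i) = 0 := by
    rw [← hspan]; exact hzZ
  have hconst := t_const Q R c k hcc t (t_rel Q R c k hcc t hbd)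
  refine ⟨t 0, ?_⟩
  have hz2 : z = t 0 • hCycR k Q R 1 c := by
    rw [hspan, hCycR_form, Finset.smul_sum]
    apply Finset.sum_congr rfl
    intro i hi
    show t i • Uu Q R c k i = t 0 • Uu Q R c k i
    rw [hconst i (Finset.mem_range.mp hi)]
  rw [hz2, sub_self]
  exact Submodule.zero_mem _

lemma fix_iff (hcc : Cocomplete Q R c) (j i : ℕ) :
    rotI Q i (rotI Q j c) = rotI Q j c ↔ rotI Q i c = c := by
  constructor
  · intro h
    have h2 : rotI Q (i + j) c = rotI Q j c := by
      rw [rot_add]; exact h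
    have h3 := (rho_inj_iff Q R c hcc).mp h2
    have h3' : i + j ≡ 0 + j [MOD periodP Q c] := by
      show (i + j) % periodP Q c = (0 + j) % periodP Q c
      rw [Nat.zero_add]; exact h3
    have h4 : i ≡ 0 [MOD periodP Q c] := Nat.ModEq.add_right_cancel' j h3'
    have h5 : i % periodP Q c = 0 := by
      have := h4
      unfold Nat.ModEq at this
      simpa using this
    exact fix_of_dvd Q R c hcc (Nat.dvd_of_mod_eq_zero h5)
  · intro h
    rw [← rot_add, Nat.add_comm, rot_add, h]

lemma per_eq (hcc : Cocomplete Q R c) (j : ℕ) :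
    periodP Q (rotI Q j c) = periodP Q c := by
  show sInf _ = sInf _
  congr 1
  ext i
  simp only [Set.mem_setOf_eq]
  exact and_congr_right (fun _ => fix_iff Q R c hcc j i)

lemma hCycR_rep (hcc : Cocomplete Q R c) (j : ℕ) :
    hCycR k Q R 1 (rotI Q j c) = hCycR k Q R 1 c := by
  show (∑ i ∈ Finset.range (periodP Q (rotI Q j c)),
      bw k Q R 1 (r1P Q (rotI Q i (rotI Q j c)), r2P Q (rotI Q i (rotI Q j c)))) = _
  rw [per_eq Q R c hcc j]
  have e1 : ∀ i ∈ Finset.range (periodP Q c),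
      bw k Q R 1 (r1P Q (rotI Q i (rotI Q j c)), r2P Q (rotI Q i (rotI Q j c)))
        = Uu Q R c k (i + j) := by
    intro i _
    rw [← rot_add Q i j c]
    rfl
  rw [Finset.sum_congr rfl e1, sum_shift _ _ (Uu_period Q R c k hcc) j, hCycR_form]

end Lin

end Circ


/-- Let `(Q, R)` be a quadratic monomial presentation and `C`
the cocomplete circuit of a cocomplete cycle `c`. Then for the subcomplex
`k(B ⊙ Γ)_C`: (1) `H₀` is one-dimensional, spanned by the class of
`(c, s(c))`, independently of the chosen representative of `C`; (2) `H₁` is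
one-dimensional, spanned by the class of
`ĥ(c) = Σ_{i=0}^{r-1} (r1(rot^i c), r2(rot^i c))`, again independently of the
representative; (3) `H_m = 0` for all `m ≥ 2`. -/
theorem homology_of_cocomplete_circuit (k : Type) [Field k] (Q : Quiv)
    (R : Set (Q.A × Q.A)) (hq : IsQuadMon Q R) (c : PathDat Q)
    (hc : Cocomplete Q R c) :
    SubHomSpannedBy k Q R c 0 (bw k Q R 0 (c, (c.1, []))) ∧
    (∀ c' : PathDat Q, IsCycle Q c' → RotEquiv Q c' c →
      bw k Q R 0 (c, (c.1, [])) - bw k Q R 0 (c', (c'.1, [])) ∈ WB k Q R c 0) ∧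
    SubHomSpannedBy k Q R c 1 (hCycR k Q R 1 c) ∧
    (∀ c' : PathDat Q, IsCycle Q c' → RotEquiv Q c' c →
      hCycR k Q R 1 c - hCycR k Q R 1 c' ∈ WB k Q R c 1) ∧
    (∀ m : ℕ, 2 ≤ m → WZ k Q R c m ≤ WB k Q R c m) := by
  have hE0 : bw k Q R 0 (c, (c.1, [])) = Ee Q R c k 0 := rfl
  refine ⟨⟨?_, ?_, ?_⟩, ?_, ⟨?_, ?_, ?_⟩, ?_, ?_⟩
  · -- (c, s(c)) is a cycle in the subcomplex
    rw [hE0]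
    refine Submodule.mem_inf.mpr ⟨?_, Ee_mem_Wsp Q R c k hc 0⟩
    show Ee Q R c k 0 ∈ (⊤ : Submodule k (Chn k Q R 0))
    exact Submodule.mem_top
  · -- not a boundary
    rw [hE0]
    exact Ee0_notin_WB Q R c k hc
  · -- spans H₀
    intro z hz
    rw [hE0]
    exact span0 Q R c k hc z (Submodule.mem_inf.mp hz).2
  · -- independence of the representative in degree 0
    intro c' hcyc hre
    obtain ⟨j, hj⟩ := classRho Q R c hc hcyc hre
    have h2 : bw k Q R 0 (c', (c'.1, [])) = Ee Q R c k j := by rw [hj]; rfl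
    rw [hE0, h2]
    exact Ee_sub_mem_WB Q R c k hc 0 j
  · -- ĥ(c) is a cycle in the subcomplex
    refine Submodule.mem_inf.mpr ⟨?_, hCycR_mem_Wsp Q R c k hc⟩
    show hCycR k Q R 1 c ∈ LinearMap.ker (bd k Q R 0)
    exact LinearMap.mem_ker.mpr (bd_hCycR Q R c k hc)
  · -- not a boundary
    rw [WB1_bot Q R c k hc]
    simp only [Submodule.mem_bot]
    exact hCycR_ne_zero Q R c k hc
  · -- spans H₁
    exact span1_final Q R c k hc
  · -- independence of the representative in degree 1
    intro c' hcyc hre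
    obtain ⟨j, hj⟩ := classRho Q R c hc hcyc hre
    rw [hj, hCycR_rep Q R c k hc j, sub_self]
    exact Submodule.zero_mem _
  · -- higher homology vanishes
    intro m hm z hz
    have hzW : z ∈ Wsp k Q R c m := (Submodule.mem_inf.mp hz).2
    rw [Wsp_bot Q R c k hc hm, Submodule.mem_bot] at hzW
    rw [hzW]
    exact Submodule.zero_mem _


end GentleTT
end
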